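/- arXiv:1401.0328 — 5 statements merged into one kernel-verified Lean document; each statement's English description precedes it below -/
import Mathlib

section
/- Let σ : [a,b] → [0,1] be strictly increasing with σ(t₂) − σ(t₁) ≥ (t₂−t₁)/L for all t₁ < t₂. Then there exists a unique increasing continuous surjective function φ₀ : [0,1] → [a,b] such that φ₀(σ(t)) = t for all t ∈ [a,b], and this φ₀ is L-Lipschitz continuous. -/
open Set

/-- For a strictly increasing `σ : [a,b] → [0,1]` with lower growth bound
`σ t₂ - σ t₁ ≥ (t₂-t₁)/L`, there is a unique (on `[0,1]`) increasing continuous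
surjective `φ₀ : [0,1] → [a,b]` with `φ₀ ∘ σ = id` on `[a,b]`, and it is
`L`-Lipschitz. -/
theorem stmt_4 (a b L : ℝ) (hab : a < b) (hL : 0 < L)
    (σ : ℝ → ℝ) (hσmap : MapsTo σ (Icc a b) (Icc 0 1))
    (hσmono : StrictMonoOn σ (Icc a b))
    (hσgrow : ∀ t₁ ∈ Icc a b, ∀ t₂ ∈ Icc a b, t₁ < t₂ → σ t₂ - σ t₁ ≥ (t₂ - t₁) / L) :
    ∃ φ₀ : ℝ → ℝ,
      (MonotoneOn φ₀ (Icc 0 1) ∧ ContinuousOn φ₀ (Icc 0 1) ∧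
        φ₀ '' (Icc 0 1) = Icc a b ∧ (∀ t ∈ Icc a b, φ₀ (σ t) = t)) ∧
      LipschitzOnWith (Real.toNNReal L) φ₀ (Icc 0 1) ∧
      ∀ ψ : ℝ → ℝ,
        (MonotoneOn ψ (Icc 0 1) ∧ ContinuousOn ψ (Icc 0 1) ∧
          ψ '' (Icc 0 1) = Icc a b ∧ (∀ t ∈ Icc a b, ψ (σ t) = t)) →
        EqOn ψ φ₀ (Icc 0 1) := by
  set S : ℝ → Set ℝ := fun s => insert a {t | t ∈ Icc a b ∧ σ t ≤ s} with hS
  set g : ℝ → ℝ := fun s => sSup (S s) with hg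
  have hane : ∀ s, (S s).Nonempty := fun s => ⟨a, Or.inl rfl⟩
  have hbdd : ∀ s, BddAbove (S s) := by
    intro s
    refine ⟨b, ?_⟩
    rintro t (rfl | ⟨⟨_, ht⟩, _⟩)
    · exact hab.le
    · exact ht
  have hg_mem : ∀ s, g s ∈ Icc a b := by
    intro s
    constructor
    · exact le_csSup (hbdd s) (Or.inl rfl)
    · apply csSup_le (hane s)
      rintro t (rfl | ⟨⟨_, ht⟩, _⟩)
      · exact hab.le
      · exact ht
  have hg_inv : ∀ t ∈ Icc a b, g (σ t) = t := by
    intro t ht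
    apply IsGreatest.csSup_eq
    constructor
    · exact Or.inr ⟨ht, le_rfl⟩
    · rintro t' (rfl | ⟨ht', hσt'⟩)
      · exact ht.1
      · by_contra h
        push_neg at h
        exact absurd (hσmono ht ht' h) (not_lt.mpr hσt')
  have hg_mono : Monotone g := by
    intro s1 s2 h
    apply csSup_le_csSup (hbdd s2) (hane s1)
    rintro t (rfl | ⟨ht, hσt⟩)
    · exact Or.inl rfl
    · exact Or.inr ⟨ht, hσt.trans h⟩
  have hlip : ∀ s1 s2 : ℝ, s1 ≤ s2 → g s2 ≤ g s1 + L * (s2 - s1) := by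
    intro s1 s2 h12
    apply csSup_le (hane s2)
    rintro t (rfl | ⟨ht, hσt⟩)
    · have := (hg_mem s1).1
      nlinarith [mul_nonneg hL.le (sub_nonneg.mpr h12)]
    · by_contra hcon
      push_neg at hcon
      have hL' : 0 ≤ L * (s2 - s1) := mul_nonneg hL.le (sub_nonneg.mpr h12)
      have hgt : g s1 < t := by nlinarith
      set t' := (g s1 + t) / 2 - L * (s2 - s1) / 2 with ht'def
      have h1 : g s1 < t' := by rw [ht'def]; linarith
      have h2 : t' < t := by rw [ht'def]; linarith
      have ht'mem : t' ∈ Icc a b := ⟨le_trans (hg_mem s1).1 h1.le, h2.le.trans ht.2⟩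
      have hnot : t' ∉ S s1 := fun hmem => absurd (le_csSup (hbdd s1) hmem) (not_le.mpr h1)
      have hσt' : s1 < σ t' := by
        by_contra hc
        push_neg at hc
        exact hnot (Or.inr ⟨ht'mem, hc⟩)
      have := hσgrow t' ht'mem t ht h2
      have hdiv : (t - t') / L ≤ σ t - σ t' := this
      have : t - t' ≤ L * (σ t - σ t') := by
        rw [div_le_iff₀ hL] at hdiv; linarith [hdiv]
      have hmul : L * (σ t - σ t') < L * (s2 - s1) := by
        apply mul_lt_mul_of_pos_left _ hL
        linarith
      rw [ht'def] at this
      linarith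
  have hglip : LipschitzOnWith (Real.toNNReal L) g (Icc 0 1) := by
    rw [lipschitzOnWith_iff_dist_le_mul]
    intro x _ y _
    rw [Real.coe_toNNReal L hL.le, Real.dist_eq, Real.dist_eq]
    rcases le_total x y with h | h
    · have h1 := hlip x y h
      have h2 := hg_mono h
      rw [abs_of_nonpos (by linarith), abs_of_nonpos (by linarith)]
      linarith
    · have h1 := hlip y x h
      have h2 := hg_mono h
      rw [abs_of_nonneg (by linarith), abs_of_nonneg (by linarith)]
      linarith
  have hgcont : ContinuousOn g (Icc 0 1) := hglip.continuousOn
  have hσa : σ a ∈ Icc (0:ℝ) 1 := hσmap (left_mem_Icc.mpr hab.le)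
  have hσb : σ b ∈ Icc (0:ℝ) 1 := hσmap (right_mem_Icc.mpr hab.le)
  have hσab : σ a < σ b := hσmono (left_mem_Icc.mpr hab.le) (right_mem_Icc.mpr hab.le) hab
  have himg : g '' Icc 0 1 = Icc a b := by
    apply Subset.antisymm
    · rintro x ⟨s, _, rfl⟩
      exact hg_mem s
    · have hsub : Icc (σ a) (σ b) ⊆ Icc (0:ℝ) 1 := Icc_subset_Icc hσa.1 hσb.2
      have := intermediate_value_Icc hσab.le (hgcont.mono hsub)
      rw [hg_inv a (left_mem_Icc.mpr hab.le), hg_inv b (right_mem_Icc.mpr hab.le)] at this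
      exact this.trans (image_mono hsub)
  refine ⟨g, ⟨hg_mono.monotoneOn _, hgcont, himg, hg_inv⟩, hglip, ?_⟩
  rintro ψ ⟨hψmono, _, hψimg, hψinv⟩ s hs
  have hψmem : ψ s ∈ Icc a b := hψimg ▸ mem_image_of_mem ψ hs
  apply le_antisymm
  · -- ψ s ≤ g s
    by_contra hc
    push_neg at hc
    set t' := (g s + ψ s) / 2 with ht'def
    have h1 : g s < t' := by linarith
    have h2 : t' < ψ s := by linarith
    have ht'mem : t' ∈ Icc a b := ⟨le_trans (hg_mem s).1 h1.le, h2.le.trans hψmem.2⟩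
    have hnot : t' ∉ S s := fun hmem => absurd (le_csSup (hbdd s) hmem) (not_le.mpr h1)
    have hσt' : s < σ t' := by
      by_contra hcc
      push_neg at hcc
      exact hnot (Or.inr ⟨ht'mem, hcc⟩)
    have := hψmono hs (hσmap ht'mem) hσt'.le
    rw [hψinv t' ht'mem] at this
    linarith
  · -- g s ≤ ψ s
    apply csSup_le (hane s)
    rintro t (rfl | ⟨ht, hσt⟩)
    · exact hψmem.1
    · have := hψmono (hσmap ht) hs hσt
      rwa [hψinv t ht] at this
end

section
/- Let (σ_k) be a sequence of strictly increasing continuous surjective functions from [a,b] onto [0,1] whose inverses φ_{0,k} = σ_k^{-1} are equi-L-Lipschitz, and suppose σ_k(t) → σ(t) for all continuity points t of a strictly increasing function σ : [a,b] → [0,1]. If the φ_{0,k} converge uniformly to some L-Lipschitz function φ₀ : [0,1] → [a,b], then φ₀(σ(t)) = t for every t ∈ [a,b] (including discontinuity points of σ). -/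
open Set Filter

/-- If strictly increasing continuous surjections `σ_k : [a,b] → [0,1]` with
equi-`L`-Lipschitz inverses `φ_{0,k}` converge to a strictly increasing `σ` at
every continuity point of `σ`, and the `φ_{0,k}` converge uniformly to an
`L`-Lipschitz `φ₀`, then `φ₀(σ(t)) = t` for every `t ∈ [a,b]`. -/
theorem stmt_6 (a b L : ℝ) (hab : a < b) (hL : 0 < L)
    (σ : ℝ → ℝ) (hσmap : MapsTo σ (Icc a b) (Icc 0 1))
    (hσmono : StrictMonoOn σ (Icc a b))
    (σk : ℕ → ℝ → ℝ) (φ0k : ℕ → ℝ → ℝ)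
    (hσkmono : ∀ k, StrictMonoOn (σk k) (Icc a b))
    (hσkcont : ∀ k, ContinuousOn (σk k) (Icc a b))
    (hσksurj : ∀ k, (σk k) '' (Icc a b) = Icc 0 1)
    (hinv₁ : ∀ k, ∀ t ∈ Icc a b, φ0k k (σk k t) = t)
    (hinv₂ : ∀ k, ∀ s ∈ Icc (0:ℝ) 1, σk k (φ0k k s) = s)
    (hφ0klip : ∀ k, LipschitzOnWith (Real.toNNReal L) (φ0k k) (Icc 0 1))
    (hconv : ∀ t ∈ Icc a b, ContinuousWithinAt σ (Icc a b) t →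
      Tendsto (fun k => σk k t) atTop (nhds (σ t)))
    (φ₀ : ℝ → ℝ) (hφ₀lip : LipschitzOnWith (Real.toNNReal L) φ₀ (Icc 0 1))
    (hunif : TendstoUniformlyOn φ0k φ₀ atTop (Icc 0 1)) :
    ∀ t ∈ Icc a b, φ₀ (σ t) = t := by
  -- σk k maps Icc a b into Icc 0 1
  have hσkmap : ∀ k, ∀ t ∈ Icc a b, σk k t ∈ Icc (0:ℝ) 1 := fun k t ht =>
    (hσksurj k) ▸ mem_image_of_mem _ ht
  -- φ0k k maps Icc 0 1 into Icc a b
  have hφ0kmap : ∀ k, ∀ s ∈ Icc (0:ℝ) 1, φ0k k s ∈ Icc a b := by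
    intro k s hs
    rw [← hσksurj k] at hs
    obtain ⟨t, ht, rfl⟩ := hs
    rw [hinv₁ k t ht]; exact ht
  -- pointwise convergence
  have hpt : ∀ s ∈ Icc (0:ℝ) 1, Tendsto (fun k => φ0k k s) atTop (nhds (φ₀ s)) :=
    fun s hs => hunif.tendsto_at hs
  -- φ₀ maps Icc 0 1 into Icc a b
  have hφ₀map : ∀ s ∈ Icc (0:ℝ) 1, φ₀ s ∈ Icc a b := by
    intro s hs
    exact isClosed_Icc.mem_of_tendsto (hpt s hs)
      (Eventually.of_forall fun k => hφ0kmap k s hs)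
  -- φ0k monotone on Icc 0 1
  have hφ0kmono : ∀ k, ∀ s ∈ Icc (0:ℝ) 1, ∀ s' ∈ Icc (0:ℝ) 1, s ≤ s' →
      φ0k k s ≤ φ0k k s' := by
    intro k s hs s' hs' hss
    by_contra h
    push_neg at h
    have := hσkmono k (hφ0kmap k s' hs') (hφ0kmap k s hs) h
    rw [hinv₂ k s hs, hinv₂ k s' hs'] at this
    exact absurd this (not_lt.2 hss)
  -- φ₀ monotone on Icc 0 1
  have hφ₀mono : ∀ s ∈ Icc (0:ℝ) 1, ∀ s' ∈ Icc (0:ℝ) 1, s ≤ s' → φ₀ s ≤ φ₀ s' := by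
    intro s hs s' hs' hss
    exact le_of_tendsto_of_tendsto (hpt s hs) (hpt s' hs')
      (Eventually.of_forall fun k => hφ0kmono k s hs s' hs' hss)
  -- φ₀ fixes continuity points
  have hfix : ∀ t ∈ Icc a b, ContinuousWithinAt σ (Icc a b) t → φ₀ (σ t) = t := by
    intro t ht hct
    have hσt : σ t ∈ Icc (0:ℝ) 1 := hσmap ht
    have h1 : Tendsto (fun k => σk k t) atTop (nhdsWithin (σ t) (Icc (0:ℝ) 1)) := by
      apply tendsto_nhdsWithin_of_tendsto_nhds_of_eventually_within
      · exact hconv t ht hct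
      · exact Eventually.of_forall fun k => hσkmap k t ht
    have h2 : Tendsto (fun k => φ0k k (σk k t)) atTop (nhds (φ₀ (σ t))) :=
      hunif.tendsto_comp (hφ₀lip.continuousOn.continuousWithinAt hσt) h1
    have h3 : (fun k => φ0k k (σk k t)) = fun _ => t := by
      funext k; exact hinv₁ k t ht
    rw [h3] at h2
    exact (tendsto_nhds_unique tendsto_const_nhds h2).symm
  -- discontinuity set is countable
  set p : ℝ → ℝ := fun t => max a (min b t) with hp
  have hpmem : ∀ t, p t ∈ Icc a b := by
    intro t
    exact ⟨le_max_left _ _, max_le hab.le (min_le_left _ _)⟩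
  have hpid : ∀ t ∈ Icc a b, p t = t := by
    intro t ht
    simp [hp, min_eq_right ht.2, max_eq_right ht.1]
  have hmono' : Monotone (σ ∘ p) := by
    intro x y hxy
    exact (hσmono.monotoneOn) (hpmem x) (hpmem y)
      (max_le_max le_rfl (min_le_min le_rfl hxy))
  have hD : {t : ℝ | ¬ ContinuousAt (σ ∘ p) t}.Countable :=
    hmono'.countable_not_continuousAt
  -- from continuity of σ ∘ p get continuity of σ within Icc
  have hcw : ∀ u ∈ Icc a b, ContinuousAt (σ ∘ p) u → ContinuousWithinAt σ (Icc a b) u := by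
    intro u hu hcu
    have : ContinuousWithinAt (σ ∘ p) (Icc a b) u := hcu.continuousWithinAt
    exact this.congr (fun x hx => by rw [Function.comp_apply, hpid x hx])
      (by rw [Function.comp_apply, hpid u hu])
  have hdense : Dense {t : ℝ | ¬ ContinuousAt (σ ∘ p) t}ᶜ := hD.dense_compl ℝ
  -- main argument
  intro t ht
  have hφrange := hφ₀map (σ t) (hσmap ht)
  by_contra hne
  rcases lt_or_gt_of_ne hne with hlt | hgt
  · -- φ₀ (σ t) < t : pick continuity point u ∈ (max a (φ₀ (σ t)), t)
    have hat : a < t := lt_of_le_of_lt hφrange.1 hlt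
    have hne' : (Ioo (max a (φ₀ (σ t))) t).Nonempty := nonempty_Ioo.2 (max_lt hat hlt)
    obtain ⟨u, hu2, hu1⟩ := hdense.exists_mem_open isOpen_Ioo hne'
    have huI : u ∈ Icc a b := ⟨(le_max_left _ _).trans hu1.1.le, hu1.2.le.trans ht.2⟩
    have hcu : ContinuousWithinAt σ (Icc a b) u := hcw u huI (not_not.1 hu2)
    have : φ₀ (σ u) ≤ φ₀ (σ t) :=
      hφ₀mono _ (hσmap huI) _ (hσmap ht) ((hσmono.monotoneOn) huI ht hu1.2.le)
    rw [hfix u huI hcu] at this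
    exact absurd (this.trans_lt (lt_of_lt_of_le ((le_max_right _ _).trans_lt hu1.1) le_rfl))
      (lt_irrefl u)
  · -- t < φ₀ (σ t) : pick continuity point u ∈ (t, min b (φ₀ (σ t)))
    have htb : t < b := lt_of_lt_of_le hgt hφrange.2
    have hne' : (Ioo t (min b (φ₀ (σ t)))).Nonempty := nonempty_Ioo.2 (lt_min htb hgt)
    obtain ⟨u, hu2, hu1⟩ := hdense.exists_mem_open isOpen_Ioo hne'
    have huI : u ∈ Icc a b := ⟨ht.1.trans hu1.1.le, hu1.2.le.trans (min_le_left _ _)⟩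
    have hcu : ContinuousWithinAt σ (Icc a b) u := hcw u huI (not_not.1 hu2)
    have : φ₀ (σ t) ≤ φ₀ (σ u) :=
      hφ₀mono _ (hσmap ht) _ (hσmap huI) ((hσmono.monotoneOn) ht huI hu1.1.le)
    rw [hfix u huI hcu] at this
    exact absurd (this.trans_lt (hu1.2.trans_le (min_le_right _ _))) (lt_irrefl _)
end

section
/- The set S = {(x, y) ∈ ℝ² : x ∈ (0,1], y = x·sin(1/x)} ∪ {(0,0)} is a compact, arcwise connected subset of ℝ² that does not have the Whitney property: for every M ≥ 1 there exist points u₁, u₂ ∈ S such that every absolutely continuous path γ : [0,1] → S from u₁ to u₂ has total variation greater than M·|u₁ − u₂|. -/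
open Set MeasureTheory intervalIntegral

private lemma cont_xsin : Continuous (fun x : ℝ => x * Real.sin (1 / x)) := by
  rw [continuous_iff_continuousAt]
  intro x
  rcases eq_or_ne x 0 with rfl | hx
  · have key : Filter.Tendsto (fun x : ℝ => x * Real.sin (1 / x)) (nhds 0) (nhds 0) := by
      apply squeeze_zero_norm _ (continuous_abs.tendsto' 0 0 abs_zero)
      intro t
      calc ‖t * Real.sin (1 / t)‖ = |t| * |Real.sin (1 / t)| := abs_mul _ _
        _ ≤ |t| * 1 := mul_le_mul_of_nonneg_left (Real.abs_sin_le_one _) (abs_nonneg _)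
        _ = |t| := mul_one _
    have h0 : (0 : ℝ) * Real.sin (1 / 0) = 0 := by simp
    simpa [ContinuousAt, h0] using key
  · exact continuousAt_id.mul
      (Real.continuous_sin.continuousAt.comp (continuousAt_const.div continuousAt_id hx))

set_option maxHeartbeats 2000000 in
/-- The set `S = {(x, x·sin(1/x)) : x ∈ (0,1]} ∪ {(0,0)}` is compact and
arcwise connected but does not have the Whitney property: for every `M ≥ 1`
there are points `u₁, u₂ ∈ S` such that every absolutely continuous path in `S`
joining them has total variation exceeding `M·|u₁ - u₂|`. -/
theorem stmt_8 :
    let S : Set (ℝ × ℝ) :=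
      {p | p.1 ∈ Ioc (0:ℝ) 1 ∧ p.2 = p.1 * Real.sin (1 / p.1)} ∪ {(0, 0)}
    IsCompact S ∧ IsPathConnected S ∧
      ∀ M : ℝ, 1 ≤ M → ∃ u₁ ∈ S, ∃ u₂ ∈ S,
        ∀ γ : ℝ → ℝ × ℝ,
          γ 0 = u₁ → γ 1 = u₂ → MapsTo γ (Icc 0 1) S →
          (∃ g : ℝ → ℝ × ℝ, IntegrableOn g (Icc 0 1) ∧
            ∀ t ∈ Icc (0:ℝ) 1, γ t = γ 0 + ∫ s in (0:ℝ)..t, g s) →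
          eVariationOn γ (Icc 0 1) > ENNReal.ofReal (M * ‖u₁ - u₂‖) := by
  intro S
  have hπ : (0:ℝ) < Real.pi := Real.pi_pos
  set f : ℝ → ℝ × ℝ := fun x => (x, x * Real.sin (1 / x)) with hf_def
  have hf : Continuous f := continuous_id.prodMk cont_xsin
  have hS_eq : S = f '' Icc 0 1 := by
    ext p
    constructor
    · rintro (⟨hx, hy⟩ | hp)
      · exact ⟨p.1, ⟨hx.1.le, hx.2⟩, by rw [hf_def]; exact Prod.ext rfl hy.symm⟩
      · refine ⟨0, ⟨le_rfl, zero_le_one⟩, ?_⟩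
        rw [mem_singleton_iff] at hp
        simp [hf_def, hp.symm]
    · rintro ⟨x, hx, rfl⟩
      rcases eq_or_lt_of_le hx.1 with h | h
      · right; simp [hf_def, ← h]
      · left; exact ⟨⟨h, hx.2⟩, rfl⟩
  refine ⟨hS_eq ▸ isCompact_Icc.image hf, hS_eq ▸
    (((convex_Icc (0:ℝ) 1).isPathConnected ⟨0, le_rfl, zero_le_one⟩).image hf), ?_⟩
  intro M hM
  -- the two endpoints
  have hu₁ : ((0:ℝ), (0:ℝ)) ∈ S := Or.inr rfl
  have hu₂ : ((1:ℝ), Real.sin 1) ∈ S := Or.inl ⟨⟨one_pos, le_rfl⟩, by norm_num⟩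
  refine ⟨(0, 0), hu₁, (1, Real.sin 1), hu₂, ?_⟩
  intro γ hγ0 hγ1 hmaps hAC
  -- the norm of the difference of the endpoints is 1
  have hnorm : ‖((0:ℝ), (0:ℝ)) - ((1:ℝ), Real.sin 1)‖ = 1 := by
    have h1 : |Real.sin 1| ≤ 1 := Real.abs_sin_le_one 1
    have hdiff : ((0:ℝ), (0:ℝ)) - ((1:ℝ), Real.sin 1) = (-1, -Real.sin 1) := by
      rw [Prod.mk_sub_mk]; norm_num
    rw [hdiff, Prod.norm_def, Real.norm_eq_abs, Real.norm_eq_abs, abs_neg, abs_neg, abs_one]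
    exact max_eq_left h1
  -- the oscillation levels
  set a : ℕ → ℝ := fun j => (Real.pi / 2 + j * Real.pi)⁻¹ with ha_def
  have hden_pos : ∀ j : ℕ, (0:ℝ) < Real.pi / 2 + j * Real.pi := by
    intro j
    have : (0:ℝ) ≤ j * Real.pi := mul_nonneg (Nat.cast_nonneg j) hπ.le
    linarith
  have ha_pos : ∀ j, 0 < a j := fun j => inv_pos.2 (hden_pos j)
  have ha_le_one : ∀ j, a j ≤ 1 := by
    intro j
    rw [ha_def]
    have h2 : (1:ℝ) ≤ Real.pi / 2 + j * Real.pi := by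
      have : (0:ℝ) ≤ j * Real.pi := mul_nonneg (Nat.cast_nonneg j) hπ.le
      have := Real.pi_gt_three
      linarith
    exact inv_le_one_of_one_le₀ h2
  have ha_anti : ∀ j k : ℕ, j ≤ k → a k ≤ a j := by
    intro j k hjk
    apply inv_anti₀ (hden_pos j)
    have : (j:ℝ) ≤ k := Nat.cast_le.2 hjk
    nlinarith
  have ha_strict : ∀ j : ℕ, a (j + 1) < a j := by
    intro j
    apply inv_strictAnti₀ (hden_pos j)
    push_cast
    nlinarith
  -- continuity of the path
  obtain ⟨g, hg, hrep⟩ := hAC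
  have hcont : ContinuousOn γ (Icc 0 1) := by
    have hprim : ContinuousOn (fun t => γ 0 + ∫ s in (0:ℝ)..t, g s) (Icc 0 1) := by
      apply continuousOn_const.add
      have huIcc : uIcc (0:ℝ) 1 = Icc 0 1 := uIcc_of_le zero_le_one
      have := intervalIntegral.continuousOn_primitive_interval (a := (0:ℝ)) (b := 1)
        (μ := volume) (f := g) (by rw [huIcc]; exact hg)
      rwa [huIcc] at this
    exact ContinuousOn.congr hprim hrep
  set φ : ℝ → ℝ := fun t => (γ t).1 with hφ_def
  have hφcont : ContinuousOn φ (Icc 0 1) := continuous_fst.comp_continuousOn hcont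
  have hφ0 : φ 0 = 0 := by rw [hφ_def]; simp [hγ0]
  have hφ1 : φ 1 = 1 := by rw [hφ_def]; simp [hγ1]
  -- first hitting times
  set A : ℕ → Set ℝ := fun j => {t | t ∈ Icc (0:ℝ) 1 ∧ a j ≤ φ t} with hA_def
  have hA1 : ∀ j, (1:ℝ) ∈ A j := fun j => ⟨⟨zero_le_one, le_rfl⟩, by rw [hφ1]; exact ha_le_one j⟩
  have hAne : ∀ j, (A j).Nonempty := fun j => ⟨1, hA1 j⟩
  have hAbdd : ∀ j, BddBelow (A j) := fun j => ⟨0, fun t ht => ht.1.1⟩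
  have hAclosed : ∀ j, IsClosed (A j) := by
    intro j
    have : A j = Icc (0:ℝ) 1 ∩ φ ⁻¹' Ici (a j) := by
      ext t; simp [hA_def, mem_preimage, and_comm]
    rw [this]
    exact hφcont.preimage_isClosed_of_isClosed isClosed_Icc isClosed_Ici
  set T : ℕ → ℝ := fun j => sInf (A j) with hT_def
  have hTmem : ∀ j, T j ∈ A j := fun j => (hAclosed j).csInf_mem (hAne j) (hAbdd j)
  have hTIcc : ∀ j, T j ∈ Icc (0:ℝ) 1 := fun j => (hTmem j).1
  have hTval : ∀ j, φ (T j) = a j := by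
    intro j
    have h0T : (0:ℝ) ≤ T j := (hTIcc j).1
    have hmemIcc : a j ∈ Icc (φ 0) (φ (T j)) := ⟨by rw [hφ0]; exact (ha_pos j).le, (hTmem j).2⟩
    obtain ⟨s, hs, hsv⟩ := intermediate_value_Icc h0T
      (hφcont.mono (Icc_subset_Icc le_rfl (hTIcc j).2)) hmemIcc
    have h1 : T j ≤ s := csInf_le (hAbdd j) ⟨⟨hs.1, hs.2.trans (hTIcc j).2⟩, hsv ▸ le_rfl⟩
    have h2 : s = T j := le_antisymm hs.2 h1
    rw [← h2]; exact hsv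
  have hTanti : ∀ j k : ℕ, j ≤ k → T k ≤ T j := by
    intro j k hjk
    exact csInf_le_csInf (hAbdd k) (hAne j) (fun t ht => ⟨ht.1, (ha_anti j k hjk).trans ht.2⟩)
  -- the path values at the hitting times
  have hγT : ∀ j, γ (T j) = (a j, (-1:ℝ) ^ j * a j) := by
    intro j
    have h1 : (γ (T j)).1 = a j := hTval j
    rcases hmaps (hTIcc j) with h | h
    · have hsin : Real.sin (1 / a j) = (-1:ℝ) ^ j := by
        rw [ha_def]
        simp only [one_div, inv_inv]
        rw [Real.sin_add_nat_mul_pi, Real.sin_pi_div_two, mul_one]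
      have h2 : (γ (T j)).2 = (-1:ℝ) ^ j * a j := by
        rw [h.2, h1, hsin, mul_comm]
      exact Prod.ext h1 h2
    · exfalso
      rw [mem_singleton_iff] at h
      have : (γ (T j)).1 = 0 := by rw [h]
      rw [h1] at this
      exact (ha_pos j).ne' this
  -- consecutive edist lower bound
  have hstep : ∀ j : ℕ, ENNReal.ofReal (a j) ≤ edist (γ (T (j + 1))) (γ (T j)) := by
    intro j
    rw [Prod.edist_eq]
    refine le_trans ?_ (le_max_right _ _)
    rw [hγT j, hγT (j + 1)]
    simp only
    rw [edist_dist, Real.dist_eq]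
    apply ENNReal.ofReal_le_ofReal
    have habs : |(-1:ℝ) ^ (j+1) * a (j+1) - (-1:ℝ) ^ j * a j| = a (j+1) + a j := by
      rcases Nat.even_or_odd j with he | ho
      · rw [he.neg_one_pow, (he.add_one).neg_one_pow]
        rw [show (-1:ℝ) * a (j+1) - 1 * a j = -(a (j+1) + a j) by ring, abs_neg]
        exact abs_of_nonneg (by positivity)
      · rw [ho.neg_one_pow, (Odd.add_one ho).neg_one_pow]
        rw [show (1:ℝ) * a (j+1) - (-1) * a j = a (j+1) + a j by ring]
        exact abs_of_nonneg (by positivity)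
    rw [habs]
    have := ha_pos (j+1)
    linarith
  clear_value T A φ
  -- choose N with harmonic sum large
  obtain ⟨N, hN⟩ : ∃ N : ℕ, Real.pi * M < ∑ i ∈ Finset.range N, (1 / (i + 1) : ℝ) :=
    (Real.tendsto_sum_range_one_div_nat_succ_atTop.eventually_gt_atTop (Real.pi * M)).exists
  have hsum_a : M < ∑ j ∈ Finset.range N, a j := by
    have hterm : ∀ j ∈ Finset.range N, (1 / (j + 1) : ℝ) / Real.pi ≤ a j := by
      intro j _
      have hle : Real.pi / 2 + j * Real.pi ≤ ((j:ℝ) + 1) * Real.pi := by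
        have : ((j:ℝ) + 1) * Real.pi = (j:ℝ) * Real.pi + Real.pi := by ring
        linarith
      have h1 : (1 / (j + 1) : ℝ) / Real.pi = (((j:ℝ) + 1) * Real.pi)⁻¹ := by
        rw [mul_inv, one_div, div_eq_mul_inv]
      rw [h1, ha_def]
      exact inv_anti₀ (hden_pos j) hle
    calc M = Real.pi * M / Real.pi := by field_simp
      _ < (∑ i ∈ Finset.range N, (1 / (i + 1) : ℝ)) / Real.pi :=
          (div_lt_div_iff_of_pos_right hπ).2 hN
      _ ≤ ∑ j ∈ Finset.range N, a j := by
          rw [Finset.sum_div]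
          exact Finset.sum_le_sum hterm
  -- the monotone sequence of times
  set u : ℕ → ℝ := fun i => T (N - i) with hu_def
  have hu_mono : Monotone u := by
    intro i k hik
    exact hTanti _ _ (Nat.sub_le_sub_left hik N)
  have hu_memIcc : ∀ i, u i ∈ Icc (0:ℝ) 1 := fun i => hTIcc _
  have hvar := eVariationOn.sum_le (f := γ) (n := N) hu_mono hu_memIcc
  -- lower bound on the variation sum
  have hsum_le : ENNReal.ofReal (∑ j ∈ Finset.range N, a j) ≤
      ∑ i ∈ Finset.range N, edist (γ (u (i + 1))) (γ (u i)) := by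
    rw [ENNReal.ofReal_sum_of_nonneg (fun j _ => (ha_pos j).le)]
    rw [← Finset.sum_range_reflect]
    apply Finset.sum_le_sum
    intro i hi
    rw [Finset.mem_range] at hi
    have hui : u i = T (N - 1 - i + 1) := by
      rw [hu_def]
      show T (N - i) = T (N - 1 - i + 1)
      congr 1
      omega
    have hui1 : u (i + 1) = T (N - 1 - i) := by
      rw [hu_def]
      show T (N - (i + 1)) = T (N - 1 - i)
      congr 1
      omega
    rw [hui, hui1, edist_comm]
    exact hstep (N - 1 - i)
  have hfinal : ENNReal.ofReal (M * ‖((0:ℝ), (0:ℝ)) - ((1:ℝ), Real.sin 1)‖) <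
      eVariationOn γ (Icc 0 1) := by
    rw [hnorm, mul_one]
    calc ENNReal.ofReal M < ENNReal.ofReal (∑ j ∈ Finset.range N, a j) := by
          rw [ENNReal.ofReal_lt_ofReal_iff (lt_trans (by linarith) hsum_a)]
          exact hsum_a
      _ ≤ ∑ i ∈ Finset.range N, edist (γ (u (i + 1))) (γ (u i)) := hsum_le
      _ ≤ eVariationOn γ (Icc 0 1) := hvar
  exact hfinal
end

section
/- Let U ⊂ ℝ^m be a compact set with the Whitney property. Then every function u : [a,b] → U of bounded variation is the pointwise (everywhere) limit of a sequence (u_k) of absolutely continuous functions u_k : [a,b] → U with equibounded total variation, i.e. sup_k Var_{[a,b]}(u_k) < ∞. -/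
open Set Filter MeasureTheory intervalIntegral

section Aux

variable {E : Type*} [NormedAddCommGroup E] [NormedSpace ℝ E]

lemma whitney_mapsTo_phi {p q : ℝ} (hpq : p < q) {τ : ℝ} (hτ : τ ∈ Icc p q) :
    (τ - p) / (q - p) ∈ Icc (0:ℝ) 1 := by
  constructor
  · exact div_nonneg (by linarith [hτ.1]) (by linarith)
  · rw [div_le_one (by linarith)]; linarith [hτ.2]

omit [NormedSpace ℝ E] in
lemma whitney_piece_integrable {g : ℝ → E} (hg : IntegrableOn g (Icc 0 1)) {p q : ℝ}
    (hpq : p < q) : IntegrableOn (fun τ => g ((τ - p) / (q - p))) (Icc p q) := by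
  have hc : q - p ≠ 0 := sub_ne_zero_of_ne hpq.ne'
  have h1 : Integrable ((Icc (0:ℝ) 1).indicator g) := by
    rw [integrable_indicator_iff measurableSet_Icc]; exact hg
  have h2 : Integrable fun τ => ((Icc (0:ℝ) 1).indicator g) ((τ - p) / (q - p)) :=
    (h1.comp_div hc).comp_sub_right p
  have h3 : (fun τ => ((Icc (0:ℝ) 1).indicator g) ((τ - p) / (q - p)))
      = (Icc p q).indicator (fun τ => g ((τ - p) / (q - p))) := by
    funext τ
    by_cases hτ : τ ∈ Icc p q
    · rw [indicator_of_mem (whitney_mapsTo_phi hpq hτ), indicator_of_mem hτ]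
    · have hs : (τ - p) / (q - p) ∉ Icc (0:ℝ) 1 := by
        intro hmem
        apply hτ
        rcases hmem with ⟨h0, h1'⟩
        constructor
        · rcases div_nonneg_iff.mp h0 with ⟨h, _⟩ | ⟨_, h⟩
          · linarith
          · linarith
        · have := (div_le_one (by linarith : (0:ℝ) < q - p)).mp h1'
          linarith
      rw [indicator_of_notMem hs, indicator_of_notMem hτ]
  rw [h3] at h2
  exact (integrable_indicator_iff measurableSet_Icc).mp h2

lemma whitney_piece_integral (g : ℝ → E) {p q : ℝ} (hpq : p < q) (t : ℝ) :
    ∫ τ in p..t, (q - p)⁻¹ • g ((τ - p) / (q - p)) = ∫ s in (0:ℝ)..((t - p)/(q - p)), g s := by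
  have hc : q - p ≠ 0 := sub_ne_zero_of_ne hpq.ne'
  rw [intervalIntegral.integral_smul]
  rw [intervalIntegral.integral_comp_sub_right (fun τ => g (τ / (q - p))) p]
  rw [intervalIntegral.integral_comp_div _ hc]
  rw [sub_self, zero_div, smul_smul, inv_mul_cancel₀ hc, one_smul]

end Aux

set_option maxHeartbeats 2000000 in
/-- If `U ⊂ ℝ^m` is compact with the Whitney property, then every BV function
`u : [a,b] → U` is the pointwise (everywhere) limit of a sequence of absolutely
continuous functions `u_k : [a,b] → U` with equibounded total variation. -/
theorem stmt_9 (m : ℕ) (a b : ℝ) (hab : a < b)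
    (U : Set (EuclideanSpace ℝ (Fin m))) (hUcomp : IsCompact U)
    (hWhitney : ∃ M : ℝ, 1 ≤ M ∧ ∀ u₁ ∈ U, ∀ u₂ ∈ U,
      ∃ γ : ℝ → EuclideanSpace ℝ (Fin m),
        γ 0 = u₁ ∧ γ 1 = u₂ ∧ MapsTo γ (Icc 0 1) U ∧
        (∃ g : ℝ → EuclideanSpace ℝ (Fin m), IntegrableOn g (Icc 0 1) ∧
          ∀ t ∈ Icc (0:ℝ) 1, γ t = γ 0 + ∫ s in (0:ℝ)..t, g s) ∧
        eVariationOn γ (Icc 0 1) ≤ ENNReal.ofReal (M * ‖u₁ - u₂‖))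
    (u : ℝ → EuclideanSpace ℝ (Fin m)) (humap : MapsTo u (Icc a b) U)
    (huBV : eVariationOn u (Icc a b) ≠ ⊤) :
    ∃ uk : ℕ → ℝ → EuclideanSpace ℝ (Fin m),
      (∀ k, MapsTo (uk k) (Icc a b) U ∧
        -- absolute continuity, via the fundamental theorem of calculus
        ∃ g : ℝ → EuclideanSpace ℝ (Fin m), IntegrableOn g (Icc a b) ∧
          ∀ t ∈ Icc a b, uk k t = uk k a + ∫ s in a..t, g s) ∧
      (∀ t ∈ Icc a b, Tendsto (fun k => uk k t) atTop (nhds (u t))) ∧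
      ∃ C : ℝ, ∀ k, eVariationOn (uk k) (Icc a b) ≤ ENNReal.ofReal C := by
  obtain ⟨M, hM1, hW⟩ := hWhitney
  have hM0 : (0:ℝ) ≤ M := le_trans zero_le_one hM1
  -- Skolemized Whitney data
  have hW' : ∀ p q : EuclideanSpace ℝ (Fin m), ∃ γ : ℝ → EuclideanSpace ℝ (Fin m),
      ∃ g : ℝ → EuclideanSpace ℝ (Fin m),
      p ∈ U → q ∈ U → (γ 0 = p ∧ γ 1 = q ∧ MapsTo γ (Icc 0 1) U ∧
        IntegrableOn g (Icc 0 1) ∧ (∀ t ∈ Icc (0:ℝ) 1, γ t = γ 0 + ∫ s in (0:ℝ)..t, g s) ∧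
        eVariationOn γ (Icc 0 1) ≤ ENNReal.ofReal (M * ‖p - q‖)) := by
    intro p q
    by_cases hpq : p ∈ U ∧ q ∈ U
    · obtain ⟨γ, h1, h2, h3, ⟨g, hg1, hg2⟩, h5⟩ := hW p hpq.1 q hpq.2
      exact ⟨γ, g, fun _ _ => ⟨h1, h2, h3, hg1, hg2, h5⟩⟩
    · exact ⟨0, 0, fun h1 h2 => absurd ⟨h1, h2⟩ hpq⟩
  choose Γ G hΓ using hW'
  -- the variation function
  have evfin : ∀ s : Set ℝ, s ⊆ Icc a b → eVariationOn u s ≠ ⊤ := fun s hs =>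
    ne_top_of_le_ne_top huBV (eVariationOn.mono u hs)
  set v : ℝ → ℝ := fun t => (eVariationOn u (Icc a (min t b))).toReal with hv
  have hvmono : Monotone v := by
    intro s t hst
    exact ENNReal.toReal_mono (evfin _ (Icc_subset_Icc le_rfl (min_le_right _ _)))
      (eVariationOn.mono u (Icc_subset_Icc le_rfl (min_le_min hst le_rfl)))
  -- key inequality : dist (u p) (u q) ≤ v q - v p  for p ≤ q in [a,b]
  have hkey : ∀ p q : ℝ, p ∈ Icc a b → q ∈ Icc a b → p ≤ q →
      dist (u p) (u q) ≤ v q - v p := by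
    intro p q hp hq hpq
    have h1 : eVariationOn u (Icc a p) + eVariationOn u (Icc p q) = eVariationOn u (Icc a q) := by
      have := eVariationOn.Icc_add_Icc u (s := univ) hp.1 hpq (mem_univ p)
      simpa using this
    have hAfin : eVariationOn u (Icc a p) ≠ ⊤ := evfin _ (Icc_subset_Icc le_rfl hp.2)
    have hBfin : eVariationOn u (Icc p q) ≠ ⊤ := evfin _ (Icc_subset_Icc hp.1 hq.2)
    have hvp : v p = (eVariationOn u (Icc a p)).toReal := by
      simp only [hv]; rw [min_eq_left hp.2]
    have hvq : v q = (eVariationOn u (Icc a q)).toReal := by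
      simp only [hv]; rw [min_eq_left hq.2]
    have hd : dist (u p) (u q) ≤ (eVariationOn u (Icc p q)).toReal := by
      rw [dist_edist]
      exact ENNReal.toReal_mono hBfin
        (eVariationOn.edist_le u (left_mem_Icc.mpr hpq) (right_mem_Icc.mpr hpq))
    have hsplit : (eVariationOn u (Icc a q)).toReal
        = (eVariationOn u (Icc a p)).toReal + (eVariationOn u (Icc p q)).toReal := by
      rw [← ENNReal.toReal_add hAfin hBfin, h1]
    rw [hvp, hvq]; linarith
  -- countable dense set
  set S : Set ℝ := insert a (insert b
    (({t : ℝ | ¬ContinuousAt v t} ∪ range ((↑) : ℚ → ℝ)) ∩ Icc a b)) with hS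
  have hScount : S.Countable :=
    (((hvmono.countable_not_continuousAt).union (countable_range _)).mono
      inter_subset_left).insert b |>.insert a
  have hSsub : S ⊆ Icc a b := by
    intro x hx
    rcases hx with rfl | hx
    · exact ⟨le_rfl, hab.le⟩
    rcases hx with rfl | hx
    · exact ⟨hab.le, le_rfl⟩
    · exact hx.2
  have haS : a ∈ S := mem_insert _ _
  have hbS : b ∈ S := mem_insert_of_mem _ (mem_insert _ _)
  obtain ⟨e, he⟩ := hScount.exists_eq_range ⟨a, haS⟩
  -- partitions
  set P : ℕ → Finset ℝ := fun k => insert a (insert b ((Finset.range (k+1)).image e)) with hP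
  have haP : ∀ k, a ∈ P k := fun k => Finset.mem_insert_self _ _
  have hbP : ∀ k, b ∈ P k := fun k => Finset.mem_insert_of_mem (Finset.mem_insert_self _ _)
  have heP : ∀ i k, i ≤ k → e i ∈ P k := by
    intro i k hik
    exact Finset.mem_insert_of_mem (Finset.mem_insert_of_mem
      (Finset.mem_image.mpr ⟨i, Finset.mem_range.mpr (by omega), rfl⟩))
  have hPsub : ∀ k, ∀ x ∈ P k, x ∈ Icc a b := by
    intro k x hx
    rcases Finset.mem_insert.mp hx with rfl | hx
    · exact ⟨le_rfl, hab.le⟩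
    rcases Finset.mem_insert.mp hx with rfl | hx
    · exact ⟨hab.le, le_rfl⟩
    · obtain ⟨i, _, rfl⟩ := Finset.mem_image.mp hx
      exact hSsub (he ▸ mem_range_self i)
  -- nearest partition points
  set pk : ℕ → ℝ → ℝ := fun k t => sSup {x : ℝ | x ∈ P k ∧ x ≤ t} with hpk
  set qk : ℕ → ℝ → ℝ := fun k t => if t < b then sInf {x : ℝ | x ∈ P k ∧ t < x} else b with hqk
  have hbddA : ∀ k t, BddAbove {x : ℝ | x ∈ P k ∧ x ≤ t} := fun k t =>
    ((P k).finite_toSet.subset (fun y hy => hy.1)).bddAbove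
  have hbddB : ∀ k t, BddBelow {x : ℝ | x ∈ P k ∧ t < x} := fun k t =>
    ((P k).finite_toSet.subset (fun y hy => hy.1)).bddBelow
  have hApk : ∀ k t, t ∈ Icc a b → pk k t ∈ P k ∧ pk k t ≤ t := by
    intro k t ht
    have hne : {x : ℝ | x ∈ P k ∧ x ≤ t}.Nonempty := ⟨a, haP k, ht.1⟩
    have hfin : {x : ℝ | x ∈ P k ∧ x ≤ t}.Finite := (P k).finite_toSet.subset (fun y hy => hy.1)
    exact hne.csSup_mem hfin
  have hpk_ge : ∀ k t, ∀ x ∈ P k, x ≤ t → x ≤ pk k t := fun k t x hx hxt =>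
    le_csSup (hbddA k t) ⟨hx, hxt⟩
  have hqk_memP : ∀ k t, t ≤ b → qk k t ∈ P k ∧ t ≤ qk k t := by
    intro k t htb'
    by_cases htb : t < b
    · have hne : {x : ℝ | x ∈ P k ∧ t < x}.Nonempty := ⟨b, hbP k, htb⟩
      have hfin : {x : ℝ | x ∈ P k ∧ t < x}.Finite := (P k).finite_toSet.subset (fun y hy => hy.1)
      have hmem := hne.csInf_mem hfin
      simp only [hqk, if_pos htb]
      exact ⟨hmem.1, hmem.2.le⟩
    · simp only [hqk, if_neg htb]
      exact ⟨hbP k, htb'⟩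
  have hqk_gt : ∀ k t, t < b → t < qk k t := by
    intro k t htb
    have hne : {x : ℝ | x ∈ P k ∧ t < x}.Nonempty := ⟨b, hbP k, htb⟩
    have hfin : {x : ℝ | x ∈ P k ∧ t < x}.Finite := (P k).finite_toSet.subset (fun y hy => hy.1)
    have hmem := hne.csInf_mem hfin
    simp only [hqk, if_pos htb]
    exact hmem.2
  have hqk_le : ∀ k t, t < b → ∀ x ∈ P k, t < x → qk k t ≤ x := by
    intro k t htb x hx htx
    simp only [hqk, if_pos htb]
    exact csInf_le (hbddB k t) ⟨hx, htx⟩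
  have hpk_eq : ∀ k t, t ∈ Icc a b → t ∈ P k → pk k t = t := fun k t ht hP' =>
    le_antisymm (hApk k t ht).2 (hpk_ge k t t hP' le_rfl)
  have hpk_mem_Icc : ∀ k t, t ∈ Icc a b → pk k t ∈ Icc a b := fun k t ht =>
    hPsub k _ (hApk k t ht).1
  have hqk_mem_Icc : ∀ k t, t ≤ b → qk k t ∈ Icc a b := fun k t ht =>
    hPsub k _ (hqk_memP k t ht).1
  -- constancy on intervals between consecutive partition points
  have hconsec : ∀ k p q, p ∈ P k → q ∈ P k → p < q → (∀ x ∈ P k, x ≤ p ∨ q ≤ x) →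
      ∀ τ ∈ Ico p q, pk k τ = p ∧ qk k τ = q := by
    intro k p q hp hq hpq hno τ hτ
    have hqb : q ≤ b := (hPsub k q hq).2
    have hτb : τ < b := lt_of_lt_of_le hτ.2 hqb
    constructor
    · apply le_antisymm
      · refine csSup_le ⟨p, hp, hτ.1⟩ fun y hy => ?_
        rcases hno y hy.1 with h | h
        · exact h
        · exact ((lt_irrefl q) ((h.trans hy.2).trans_lt hτ.2)).elim
      · exact le_csSup (hbddA k τ) ⟨hp, hτ.1⟩
    · simp only [hqk, if_pos hτb]
      apply le_antisymm
      · exact csInf_le (hbddB k τ) ⟨hq, hτ.2⟩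
      · refine le_csInf ⟨q, hq, hτ.2⟩ fun y hy => ?_
        rcases hno y hy.1 with h | h
        · exact ((lt_irrefl τ) ((hy.2.trans_le h).trans_le hτ.1)).elim
        · exact h
  -- the approximating sequence
  set sp : ℕ → ℝ → ℝ := fun k t => (t - pk k t) / (qk k t - pk k t) with hsp
  set uk : ℕ → ℝ → EuclideanSpace ℝ (Fin m) :=
    fun k t => Γ (u (pk k t)) (u (qk k t)) (sp k t) with huk
  set gk : ℕ → ℝ → EuclideanSpace ℝ (Fin m) :=
    fun k τ => (qk k τ - pk k τ)⁻¹ • G (u (pk k τ)) (u (qk k τ)) (sp k τ) with hgk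
  have hsp_mem : ∀ k t, t ∈ Icc a b → sp k t ∈ Icc (0:ℝ) 1 := by
    intro k t ht
    by_cases htb : t < b
    · have h1 := (hApk k t ht).2
      have h2 := hqk_gt k t htb
      have hpq : pk k t < qk k t := lt_of_le_of_lt h1 h2
      exact whitney_mapsTo_phi hpq ⟨h1, h2.le⟩
    · have htb' : t = b := le_antisymm ht.2 (le_of_not_gt htb)
      have h1 : pk k t = t := hpk_eq k t ht (htb' ▸ hbP k)
      simp only [hsp, h1, sub_self, zero_div]
      exact ⟨le_rfl, zero_le_one⟩
  have huk_mem : ∀ k, MapsTo (uk k) (Icc a b) U := by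
    intro k t ht
    have hpU : u (pk k t) ∈ U := humap (hpk_mem_Icc k t ht)
    have hqU : u (qk k t) ∈ U := humap (hqk_mem_Icc k t ht.2)
    exact (hΓ _ _ hpU hqU).2.2.1 (hsp_mem k t ht)
  have huk_part : ∀ k t, t ∈ Icc a b → t ∈ P k → uk k t = u t := by
    intro k t ht htP
    have h1 : pk k t = t := hpk_eq k t ht htP
    have hpU : u (pk k t) ∈ U := humap (hpk_mem_Icc k t ht)
    have hqU : u (qk k t) ∈ U := humap (hqk_mem_Icc k t ht.2)
    have h2 : sp k t = 0 := by simp only [hsp, h1, sub_self, zero_div]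
    calc uk k t = Γ (u (pk k t)) (u (qk k t)) (sp k t) := rfl
      _ = Γ (u (pk k t)) (u (qk k t)) 0 := by rw [h2]
      _ = u (pk k t) := (hΓ _ _ hpU hqU).1
      _ = u t := by rw [h1]
  -- description of uk on a cell of the partition
  have hpiece : ∀ k p q, p ∈ P k → q ∈ P k → p < q → (∀ x ∈ P k, x ≤ p ∨ q ≤ x) →
      EqOn (uk k) ((Γ (u p) (u q)) ∘ (fun τ => (τ - p) / (q - p))) (Icc p q) := by
    intro k p q hpP hqP hpq hno τ hτ
    have hpI : p ∈ Icc a b := hPsub k p hpP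
    have hqI : q ∈ Icc a b := hPsub k q hqP
    have hpU : u p ∈ U := humap hpI
    have hqU : u q ∈ U := humap hqI
    by_cases hτq : τ = q
    · subst hτq
      have h1 : uk k τ = u τ := huk_part k τ hqI hqP
      have h2 : (τ - p) / (τ - p) = 1 := div_self (sub_ne_zero_of_ne hpq.ne')
      simp only [Function.comp_apply, h2, h1]
      exact ((hΓ _ _ hpU hqU).2.1).symm
    · have hτI : τ ∈ Ico p q := ⟨hτ.1, lt_of_le_of_ne hτ.2 hτq⟩
      obtain ⟨h1, h2⟩ := hconsec k p q hpP hqP hpq hno τ hτI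
      simp only [Function.comp_apply, huk, hsp, h1, h2]
  -- integrability, integral formula and variation bound on a cell
  have hpieceAll : ∀ k p q, p ∈ P k → q ∈ P k → p < q → (∀ x ∈ P k, x ≤ p ∨ q ≤ x) →
      IntegrableOn (gk k) (Icc p q) ∧
      (∀ t ∈ Icc p q, (∫ τ in p..t, gk k τ) = Γ (u p) (u q) ((t - p) / (q - p)) - u p) ∧
      eVariationOn (uk k) (Icc p q) ≤ ENNReal.ofReal M * eVariationOn u (Icc p q) := by
    intro k p q hpP hqP hpq hno
    have hpI : p ∈ Icc a b := hPsub k p hpP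
    have hqI : q ∈ Icc a b := hPsub k q hqP
    have hpU : u p ∈ U := humap hpI
    have hqU : u q ∈ U := humap hqI
    obtain ⟨hγ0, hγ1, hγmap, hGint, hγint, hγvar⟩ := hΓ (u p) (u q) hpU hqU
    have hc : q - p ≠ 0 := sub_ne_zero_of_ne hpq.ne'
    have hpgint : IntegrableOn
        (fun τ => (q - p)⁻¹ • G (u p) (u q) ((τ - p) / (q - p))) (Icc p q) :=
      (whitney_piece_integrable hGint hpq).smul (q - p)⁻¹
    have hgkpg : ∀ τ ∈ Ico p q,
        gk k τ = (q - p)⁻¹ • G (u p) (u q) ((τ - p) / (q - p)) := by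
      intro τ hτ
      obtain ⟨h1, h2⟩ := hconsec k p q hpP hqP hpq hno τ hτ
      simp only [hgk, hsp, h1, h2]
    have haene : ∀ᵐ τ : ℝ, τ ≠ q := by
      rw [ae_iff]
      simp only [not_not, setOf_eq_eq_singleton]
      exact measure_singleton q
    have hIint : IntegrableOn (gk k) (Icc p q) := by
      apply hpgint.congr ?_
      have h1 : ∀ᵐ τ ∂(volume.restrict (Icc p q)), τ ∈ Icc p q :=
        ae_restrict_mem measurableSet_Icc
      have h2 : ∀ᵐ τ ∂(volume.restrict (Icc p q)), τ ≠ q :=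
        haene.filter_mono (ae_mono Measure.restrict_le_self)
      filter_upwards [h1, h2] with τ hτ1 hτ2
      exact (hgkpg τ ⟨hτ1.1, lt_of_le_of_ne hτ1.2 hτ2⟩).symm
    refine ⟨hIint, ?_, ?_⟩
    · intro t ht
      have heq : (∫ τ in p..t, gk k τ)
          = ∫ τ in p..t, (q - p)⁻¹ • G (u p) (u q) ((τ - p) / (q - p)) := by
        apply intervalIntegral.integral_congr_ae
        filter_upwards [haene] with τ hτ hτI
        rw [uIoc_of_le ht.1] at hτI
        exact hgkpg τ ⟨hτI.1.le, lt_of_le_of_ne (hτI.2.trans ht.2) hτ⟩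
      rw [heq, whitney_piece_integral (G (u p) (u q)) hpq t]
      have hs : (t - p) / (q - p) ∈ Icc (0:ℝ) 1 := whitney_mapsTo_phi hpq ht
      rw [hγint _ hs, hγ0]
      abel
    · rw [eVariationOn.eq_of_eqOn (hpiece k p q hpP hqP hpq hno)]
      calc eVariationOn (Γ (u p) (u q) ∘ fun τ => (τ - p) / (q - p)) (Icc p q)
          ≤ eVariationOn (Γ (u p) (u q)) (Icc 0 1) := by
            apply eVariationOn.comp_le_of_monotoneOn
            · intro s hs t ht hst
              have h0 : (0:ℝ) < q - p := by linarith
              apply div_le_div_of_nonneg_right ?_ ?_ <;> try linarith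

            · intro τ hτ; exact whitney_mapsTo_phi hpq hτ
        _ ≤ ENNReal.ofReal (M * ‖u p - u q‖) := hγvar
        _ = ENNReal.ofReal M * ENNReal.ofReal ‖u p - u q‖ := ENNReal.ofReal_mul hM0
        _ ≤ ENNReal.ofReal M * eVariationOn u (Icc p q) := by
            apply mul_le_mul_right
            have hed : ENNReal.ofReal ‖u p - u q‖ = edist (u p) (u q) := by
              rw [edist_dist, dist_eq_norm]
            rw [hed]
            exact eVariationOn.edist_le u (left_mem_Icc.mpr hpq.le) (right_mem_Icc.mpr hpq.le)
  -- distance from uk to the left partition value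
  have hdistb : ∀ k t, t ∈ Icc a b →
      dist (uk k t) (u (pk k t)) ≤ M * ‖u (pk k t) - u (qk k t)‖ := by
    intro k t ht
    have hpU : u (pk k t) ∈ U := humap (hpk_mem_Icc k t ht)
    have hqU : u (qk k t) ∈ U := humap (hqk_mem_Icc k t ht.2)
    obtain ⟨hγ0, hγ1, hγmap, hGint, hγint, hγvar⟩ := hΓ _ _ hpU hqU
    have h1 := eVariationOn.edist_le (Γ (u (pk k t)) (u (qk k t))) (hsp_mem k t ht)
      (left_mem_Icc.mpr zero_le_one)
    rw [hγ0] at h1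
    have h2 : edist (uk k t) (u (pk k t)) ≤ ENNReal.ofReal (M * ‖u (pk k t) - u (qk k t)‖) :=
      le_trans h1 hγvar
    rw [dist_edist]
    calc (edist (uk k t) (u (pk k t))).toReal
        ≤ (ENNReal.ofReal (M * ‖u (pk k t) - u (qk k t)‖)).toReal :=
          ENNReal.toReal_mono ENNReal.ofReal_ne_top h2
      _ = M * ‖u (pk k t) - u (qk k t)‖ := ENNReal.toReal_ofReal (by positivity)
  -- main per-k facts
  have hmain : ∀ k, IntegrableOn (gk k) (Icc a b) ∧
      (∀ t ∈ Icc a b, (∫ τ in a..t, gk k τ) = uk k t - u a) ∧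
      eVariationOn (uk k) (Icc a b) ≤ ENNReal.ofReal M * eVariationOn u (Icc a b) := by
    intro k
    set x : Fin (P k).card → ℝ := fun i => ((P k).orderIsoOfFin rfl i : ℝ) with hx
    have hxmem : ∀ i, x i ∈ P k := fun i => ((P k).orderIsoOfFin rfl i).2
    have hxmono : StrictMono x := fun i j hij =>
      Subtype.coe_lt_coe.mpr (((P k).orderIsoOfFin rfl).strictMono hij)
    have hxsurj : ∀ y ∈ P k, ∃ i, x i = y := by
      intro y hy
      refine ⟨((P k).orderIsoOfFin rfl).symm ⟨y, hy⟩, ?_⟩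
      simp only [hx, OrderIso.apply_symm_apply]
    have hxcons : ∀ (i j : Fin (P k).card), (i : ℕ) + 1 = (j : ℕ) →
        ∀ y ∈ P k, y ≤ x i ∨ x j ≤ y := by
      intro i j hij y hy
      obtain ⟨l, rfl⟩ := hxsurj y hy
      rcases le_or_gt l i with h | h
      · exact Or.inl (hxmono.monotone h)
      · refine Or.inr (hxmono.monotone ?_)
        rw [Fin.le_def]; rw [Fin.lt_def] at h; omega
    have hcard0 : 0 < (P k).card := Finset.card_pos.mpr ⟨a, haP k⟩
    have hx0 : x ⟨0, hcard0⟩ = a := by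
      obtain ⟨ia, hia⟩ := hxsurj a (haP k)
      refine le_antisymm ?_ (hPsub k _ (hxmem _)).1
      rw [← hia]
      exact hxmono.monotone (by simp [Fin.le_def])
    have main : ∀ i : ℕ, ∀ h : i < (P k).card,
        IntegrableOn (gk k) (Icc a (x ⟨i, h⟩)) ∧
        ((∫ τ in a..(x ⟨i, h⟩), gk k τ) = u (x ⟨i, h⟩) - u a) ∧
        eVariationOn (uk k) (Icc a (x ⟨i, h⟩)) ≤
          ENNReal.ofReal M * eVariationOn u (Icc a (x ⟨i, h⟩)) := by
      intro i
      induction i with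
      | zero =>
        intro h
        rw [hx0]
        have hz : volume (Icc a a) = 0 := by simp
        refine ⟨?_, ?_, ?_⟩
        · unfold IntegrableOn
          rw [Measure.restrict_eq_zero.mpr hz]
          exact integrable_zero_measure
        · rw [intervalIntegral.integral_same, eq_comm, sub_eq_zero]
        · rw [Icc_self, eVariationOn.subsingleton (uk k) subsingleton_singleton]
          exact zero_le
      | succ i ih =>
        intro h
        have hi : i < (P k).card := Nat.lt_of_succ_lt h
        obtain ⟨ihInt, ihEq, ihVar⟩ := ih hi
        have hpq : x ⟨i, hi⟩ < x ⟨i+1, h⟩ := hxmono (by simp [Fin.lt_def])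
        have hno : ∀ y ∈ P k, y ≤ x ⟨i, hi⟩ ∨ x ⟨i+1, h⟩ ≤ y := hxcons _ _ rfl
        obtain ⟨pInt, pEq, pVar⟩ := hpieceAll k _ _ (hxmem ⟨i, hi⟩) (hxmem ⟨i+1, h⟩) hpq hno
        have hap : a ≤ x ⟨i, hi⟩ := (hPsub k _ (hxmem _)).1
        have hIcc : Icc a (x ⟨i, hi⟩) ∪ Icc (x ⟨i, hi⟩) (x ⟨i+1, h⟩) = Icc a (x ⟨i+1, h⟩) :=
          Icc_union_Icc_eq_Icc hap hpq.le
        have hIntq : IntegrableOn (gk k) (Icc a (x ⟨i+1, h⟩)) := by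
          rw [← hIcc]; exact ihInt.union pInt
        refine ⟨hIntq, ?_, ?_⟩
        · have h1 : IntervalIntegrable (gk k) volume a (x ⟨i, hi⟩) :=
            (intervalIntegrable_iff_integrableOn_Icc_of_le hap).mpr ihInt
          have h2 : IntervalIntegrable (gk k) volume (x ⟨i, hi⟩) (x ⟨i+1, h⟩) :=
            (intervalIntegrable_iff_integrableOn_Icc_of_le hpq.le).mpr pInt
          rw [← intervalIntegral.integral_add_adjacent_intervals h1 h2, ihEq,
            pEq _ (right_mem_Icc.mpr hpq.le), div_self (sub_ne_zero_of_ne hpq.ne'),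
            (hΓ _ _ (humap (hPsub k _ (hxmem ⟨i, hi⟩)))
              (humap (hPsub k _ (hxmem ⟨i+1, h⟩)))).2.1]
          abel
        · have hsplit : eVariationOn (uk k) (Icc a (x ⟨i, hi⟩))
              + eVariationOn (uk k) (Icc (x ⟨i, hi⟩) (x ⟨i+1, h⟩))
              = eVariationOn (uk k) (Icc a (x ⟨i+1, h⟩)) := by
            have := eVariationOn.Icc_add_Icc (uk k) (s := univ) hap hpq.le (mem_univ _)
            simpa using this
          have hsplitu : eVariationOn u (Icc a (x ⟨i, hi⟩))
              + eVariationOn u (Icc (x ⟨i, hi⟩) (x ⟨i+1, h⟩))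
              = eVariationOn u (Icc a (x ⟨i+1, h⟩)) := by
            have := eVariationOn.Icc_add_Icc u (s := univ) hap hpq.le (mem_univ _)
            simpa using this
          rw [← hsplit, ← hsplitu, mul_add]
          exact add_le_add ihVar pVar
    obtain ⟨ib, hib⟩ := hxsurj b (hbP k)
    have mainb := main ib.1 ib.2
    rw [Fin.eta, hib] at mainb
    refine ⟨mainb.1, ?_, mainb.2.2⟩
    intro t ht
    by_cases htP : t ∈ P k
    · obtain ⟨it, hit⟩ := hxsurj t htP
      have hm := main it.1 it.2
      rw [Fin.eta, hit] at hm
      rw [hm.2.1, huk_part k t ht htP]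
    · have htb : t < b := lt_of_le_of_ne ht.2 (fun hh => htP (hh ▸ hbP k))
      have hpP := (hApk k t ht).1
      have hpt : pk k t < t := lt_of_le_of_ne (hApk k t ht).2 (fun hh => htP (hh ▸ hpP))
      have hq_gt := hqk_gt k t htb
      have hpq : pk k t < qk k t := hpt.trans hq_gt
      have hqP := (hqk_memP k t ht.2).1
      have hno : ∀ y ∈ P k, y ≤ pk k t ∨ qk k t ≤ y := by
        intro y hy
        rcases le_or_gt y t with h | h
        · exact Or.inl (hpk_ge k t y hy h)
        · exact Or.inr (hqk_le k t htb y hy h)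
      obtain ⟨pInt, pEq, _⟩ := hpieceAll k _ _ hpP hqP hpq hno
      obtain ⟨ip, hip⟩ := hxsurj (pk k t) hpP
      have hm := main ip.1 ip.2
      rw [Fin.eta, hip] at hm
      have hap : a ≤ pk k t := (hpk_mem_Icc k t ht).1
      have h1 : IntervalIntegrable (gk k) volume a (pk k t) :=
        (intervalIntegrable_iff_integrableOn_Icc_of_le hap).mpr hm.1
      have h2 : IntervalIntegrable (gk k) volume (pk k t) t := by
        apply (intervalIntegrable_iff_integrableOn_Icc_of_le hpt.le).mpr
        exact pInt.mono_set (Icc_subset_Icc le_rfl hq_gt.le)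
      rw [← intervalIntegral.integral_add_adjacent_intervals h1 h2, hm.2.1,
        pEq t ⟨hpt.le, hq_gt.le⟩]
      have hukt : uk k t = Γ (u (pk k t)) (u (qk k t)) ((t - pk k t) / (qk k t - pk k t)) := rfl
      rw [hukt]
      abel
  have hukA : ∀ k, uk k a = u a := fun k => huk_part k a ⟨le_rfl, hab.le⟩ (haP k)
  refine ⟨uk, ?_, ?_, ?_⟩
  · intro k
    refine ⟨huk_mem k, gk k, (hmain k).1, ?_⟩
    intro t ht
    rw [(hmain k).2.1 t ht, hukA k]
    abel
  · -- pointwise convergence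
    intro t ht
    by_cases htS : t ∈ S
    · obtain ⟨nt, hnt⟩ : ∃ n, e n = t := by rw [he] at htS; exact htS
      refine Tendsto.congr' ?_ tendsto_const_nhds
      filter_upwards [eventually_ge_atTop nt] with k hk
      exact (huk_part k t ht (hnt ▸ heP nt k hk)).symm
    · have hta : a < t := lt_of_le_of_ne ht.1 (fun hh => htS (hh ▸ haS))
      have htb : t < b := lt_of_le_of_ne ht.2 (fun hh => htS (hh ▸ hbS))
      have hcont : ContinuousAt v t := by
        by_contra hc
        exact htS (mem_insert_of_mem _ (mem_insert_of_mem _ ⟨Or.inl hc, ht⟩))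
      rw [Metric.tendsto_atTop]
      intro ε hε
      have hM1pos : (0:ℝ) < M + 1 := by linarith
      set ε' := ε / (2 * (M + 1)) with hε'
      have hε'pos : 0 < ε' := by positivity
      have hε'eq : ε' * (2 * (M + 1)) = ε := by
        rw [hε']; field_simp
      obtain ⟨δ, hδpos, hδ⟩ := Metric.continuousAt_iff.mp hcont ε' hε'pos
      obtain ⟨r, hr1, hr2⟩ := exists_rat_btwn (show max a (t - δ) < t from
        max_lt hta (by linarith))
      obtain ⟨r', hr'1, hr'2⟩ := exists_rat_btwn (show t < min b (t + δ) from
        lt_min htb (by linarith))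
      have hrI : (r:ℝ) ∈ Icc a b := ⟨(le_max_left _ _).trans hr1.le, (hr2.trans htb).le⟩
      have hr'I : (r':ℝ) ∈ Icc a b :=
        ⟨(hta.trans hr'1).le, (hr'2.trans_le (min_le_left _ _)).le⟩
      have hrS : (r:ℝ) ∈ S :=
        mem_insert_of_mem _ (mem_insert_of_mem _ ⟨Or.inr ⟨r, rfl⟩, hrI⟩)
      have hr'S : (r':ℝ) ∈ S :=
        mem_insert_of_mem _ (mem_insert_of_mem _ ⟨Or.inr ⟨r', rfl⟩, hr'I⟩)
      obtain ⟨n1, hn1⟩ : ∃ n, e n = (r:ℝ) := by rw [he] at hrS; exact hrS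
      obtain ⟨n2, hn2⟩ : ∃ n, e n = (r':ℝ) := by rw [he] at hr'S; exact hr'S
      refine ⟨max n1 n2, fun k hk => ?_⟩
      have hrP : (r:ℝ) ∈ P k := hn1 ▸ heP n1 k (le_of_max_le_left hk)
      have hr'P : (r':ℝ) ∈ P k := hn2 ▸ heP n2 k (le_of_max_le_right hk)
      have hpr : (r:ℝ) ≤ pk k t := hpk_ge k t _ hrP hr2.le
      have hpt : pk k t ≤ t := (hApk k t ht).2
      have hqr : qk k t ≤ (r':ℝ) := hqk_le k t htb _ hr'P hr'1
      have hqt : t < qk k t := hqk_gt k t htb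
      have hpI : pk k t ∈ Icc a b := hpk_mem_Icc k t ht
      have hqI : qk k t ∈ Icc a b := hqk_mem_Icc k t ht.2
      have hdp : dist (pk k t) t < δ := by
        rw [Real.dist_eq, abs_lt]
        constructor
        · have : t - δ < (r:ℝ) := lt_of_le_of_lt (le_max_right a (t - δ)) hr1
          linarith
        · linarith
      have hdq : dist (qk k t) t < δ := by
        rw [Real.dist_eq, abs_lt]
        constructor
        · linarith
        · have : (r':ℝ) < t + δ := lt_of_lt_of_le hr'2 (min_le_right b (t + δ))
          linarith
      have hvp : |v (pk k t) - v t| < ε' := by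
        have := hδ hdp; rwa [Real.dist_eq] at this
      have hvq : |v (qk k t) - v t| < ε' := by
        have := hδ hdq; rwa [Real.dist_eq] at this
      have hvp' : v t - v (pk k t) < ε' := by
        rw [abs_lt] at hvp; linarith [hvp.1]
      have hvq' : v (qk k t) - v t < ε' := by
        rw [abs_lt] at hvq; linarith [hvq.2]
      have hd1 : dist (uk k t) (u (pk k t)) ≤ M * ‖u (pk k t) - u (qk k t)‖ := hdistb k t ht
      have hd2 : ‖u (pk k t) - u (qk k t)‖ ≤ v (qk k t) - v (pk k t) := by
        rw [← dist_eq_norm]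
        exact hkey _ _ hpI hqI (hpt.trans hqt.le)
      have hd3 : dist (u (pk k t)) (u t) ≤ v t - v (pk k t) := hkey _ _ hpI ht hpt
      have htri : dist (uk k t) (u t) ≤ dist (uk k t) (u (pk k t)) + dist (u (pk k t)) (u t) :=
        dist_triangle _ _ _
      have hMb : M * ‖u (pk k t) - u (qk k t)‖ ≤ M * (v (qk k t) - v (pk k t)) :=
        mul_le_mul_of_nonneg_left hd2 hM0
      have hvsum : v (qk k t) - v (pk k t) < 2 * ε' := by linarith
      have hfin : M * (v (qk k t) - v (pk k t)) + (v t - v (pk k t)) < ε := by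
        have h5 : M * (v (qk k t) - v (pk k t)) ≤ M * (2 * ε') :=
          mul_le_mul_of_nonneg_left hvsum.le hM0
        nlinarith [hε'eq]
      calc dist (uk k t) (u t)
          ≤ dist (uk k t) (u (pk k t)) + dist (u (pk k t)) (u t) := htri
        _ ≤ M * (v (qk k t) - v (pk k t)) + (v t - v (pk k t)) := by
            refine add_le_add (hd1.trans hMb) hd3
        _ < ε := hfin
  · refine ⟨M * (eVariationOn u (Icc a b)).toReal, fun k => ?_⟩
    calc eVariationOn (uk k) (Icc a b)
        ≤ ENNReal.ofReal M * eVariationOn u (Icc a b) := (hmain k).2.2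
      _ = ENNReal.ofReal M * ENNReal.ofReal (eVariationOn u (Icc a b)).toReal := by
          rw [ENNReal.ofReal_toReal huBV]
      _ = ENNReal.ofReal (M * (eVariationOn u (Icc a b)).toReal) :=
          (ENNReal.ofReal_mul hM0).symm
end

section
/- Let u : [a,b] → ℝ^m be absolutely continuous and define σ(t) = (t − a + Var_{[a,t]}(u)) / (b − a + Var_{[a,b]}(u)). Then σ is absolutely continuous, strictly increasing, and surjective from [a,b] onto [0,1], and its inverse φ₀ : [0,1] → [a,b] is Lipschitz continuous with constant b − a + Var_{[a,b]}(u); moreover u ∘ φ₀ is Lipschitz continuous with the same constant. -/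
open Set MeasureTheory intervalIntegral

/-- For an absolutely continuous `u : [a,b] → ℝ^m`, the normalized clock
`σ(t) = (t - a + Var_{[a,t]}(u)) / (b - a + Var_{[a,b]}(u))` is absolutely
continuous, strictly increasing, surjective onto `[0,1]`, its inverse `φ₀` is
Lipschitz with constant `b - a + Var_{[a,b]}(u)`, and `u ∘ φ₀` is Lipschitz
with the same constant. -/
theorem stmt_11 (m : ℕ) (a b : ℝ) (hab : a < b)
    (u : ℝ → EuclideanSpace ℝ (Fin m))
    -- absolute continuity of u, via the fundamental theorem of calculus
    (hAC : ∃ u' : ℝ → EuclideanSpace ℝ (Fin m), IntegrableOn u' (Icc a b) ∧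
      ∀ t ∈ Icc a b, u t = u a + ∫ s in a..t, u' s)
    (σ : ℝ → ℝ)
    (hσdef : ∀ t, σ t =
      (t - a + (eVariationOn u (Icc a t)).toReal) /
        (b - a + (eVariationOn u (Icc a b)).toReal)) :
    (∃ g : ℝ → ℝ, IntegrableOn g (Icc a b) ∧
      ∀ t ∈ Icc a b, σ t = σ a + ∫ s in a..t, g s) ∧
    StrictMonoOn σ (Icc a b) ∧ σ '' (Icc a b) = Icc 0 1 ∧
    ∃ φ₀ : ℝ → ℝ,
      (∀ t ∈ Icc a b, φ₀ (σ t) = t) ∧ (∀ s ∈ Icc (0:ℝ) 1, σ (φ₀ s) = s) ∧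
      LipschitzOnWith (Real.toNNReal (b - a + (eVariationOn u (Icc a b)).toReal))
        φ₀ (Icc 0 1) ∧
      LipschitzOnWith (Real.toNNReal (b - a + (eVariationOn u (Icc a b)).toReal))
        (u ∘ φ₀) (Icc 0 1) := by
  classical
  obtain ⟨u', hu'int, hu⟩ := hAC
  set u'e : ℝ → EuclideanSpace ℝ (Fin m) := (Icc a b).indicator u' with hu'e_def
  have hint : Integrable u'e volume := hu'int.integrable_indicator measurableSet_Icc
  set f0 : ℝ → ℝ := fun s => ‖u'e s‖ with hf0_def
  have hf0 : Integrable f0 volume := hint.norm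
  have hf0nn : ∀ s, 0 ≤ f0 s := fun s => norm_nonneg _
  have hf0ii : ∀ x y : ℝ, IntervalIntegrable f0 volume x y := fun x y =>
    hf0.intervalIntegrable
  have hu'eii : ∀ x y : ℝ, IntervalIntegrable u'e volume x y := fun x y =>
    hint.intervalIntegrable
  -- difference of u as an integral of the extended derivative
  have husub : ∀ x ∈ Icc a b, ∀ y ∈ Icc a b, u y - u x = ∫ s in x..y, u'e s := by
    intro x hx y hy
    have hix : IntervalIntegrable u' volume a x :=
      (hu'int.mono_set (uIcc_subset_Icc (left_mem_Icc.2 hab.le) hx)).intervalIntegrable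
    have hiy : IntervalIntegrable u' volume a y :=
      (hu'int.mono_set (uIcc_subset_Icc (left_mem_Icc.2 hab.le) hy)).intervalIntegrable
    have h1 : (∫ s in a..y, u' s) - ∫ s in a..x, u' s = ∫ s in x..y, u' s :=
      intervalIntegral.integral_interval_sub_left hiy hix
    have h2 : ∫ s in x..y, u' s = ∫ s in x..y, u'e s := by
      apply intervalIntegral.integral_congr
      intro z hz
      have : z ∈ Icc a b := uIcc_subset_Icc hx hy hz
      simp [hu'e_def, Set.indicator_of_mem this]
    rw [hu y hy, hu x hx, ← h2, ← h1]
    abel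
  -- upper bound for the variation by the integral of the norm of the derivative
  have hA : ∀ x ∈ Icc a b, ∀ y ∈ Icc a b, x ≤ y →
      eVariationOn u (Icc x y) ≤ ENNReal.ofReal (∫ s in x..y, f0 s) := by
    intro x hx y hy hxy
    apply iSup_le
    rintro ⟨n, ⟨q, hq, hqs⟩⟩
    have hq1 : ∀ i, q i ∈ Icc a b := fun i => Icc_subset_Icc hx.1 hy.2 (hqs i)
    have step : ∀ i, edist (u (q (i+1))) (u (q i)) ≤
        ENNReal.ofReal (∫ s in q i..q (i+1), f0 s) := by
      intro i
      rw [edist_dist]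
      apply ENNReal.ofReal_le_ofReal
      rw [dist_eq_norm, husub _ (hq1 i) _ (hq1 (i+1))]
      exact intervalIntegral.norm_integral_le_integral_norm (hq (Nat.le_succ i))
    calc ∑ i ∈ Finset.range n, edist (u (q (i+1))) (u (q i))
        ≤ ∑ i ∈ Finset.range n, ENNReal.ofReal (∫ s in q i..q (i+1), f0 s) :=
          Finset.sum_le_sum fun i _ => step i
      _ = ENNReal.ofReal (∑ i ∈ Finset.range n, ∫ s in q i..q (i+1), f0 s) :=
          (ENNReal.ofReal_sum_of_nonneg fun i _ =>
            intervalIntegral.integral_nonneg (hq (Nat.le_succ i)) fun s _ => hf0nn s).symm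
      _ = ENNReal.ofReal (∫ s in (q 0)..(q n), f0 s) := by
          rw [intervalIntegral.sum_integral_adjacent_intervals fun i _ => hf0ii _ _]
      _ ≤ ENNReal.ofReal (∫ s in x..y, f0 s) := by
          apply ENNReal.ofReal_le_ofReal
          exact intervalIntegral.integral_mono_interval (hqs 0).1 (hq (Nat.zero_le n))
            (hqs n).2 (Filter.Eventually.of_forall hf0nn) (hf0ii x y)
  have hamem : a ∈ Icc a b := left_mem_Icc.2 hab.le
  have hbmem : b ∈ Icc a b := right_mem_Icc.2 hab.le
  have hfinb : eVariationOn u (Icc a b) ≠ ⊤ :=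
    ne_top_of_le_ne_top ENNReal.ofReal_ne_top (hA a hamem b hbmem hab.le)
  have hfint : ∀ x ∈ Icc a b, ∀ y ∈ Icc a b, eVariationOn u (Icc x y) ≠ ⊤ := by
    intro x hx y hy
    exact ne_top_of_le_ne_top hfinb (eVariationOn.mono u (Icc_subset_Icc hx.1 hy.2))
  set v : ℝ → ℝ := fun t => (eVariationOn u (Icc a t)).toReal with hv_def
  have hva : v a = 0 := by
    have : eVariationOn u (Icc a a) = 0 := by
      rw [Set.Icc_self]
      exact eVariationOn.subsingleton u subsingleton_singleton
    simp [hv_def, this]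
  have hadd : ∀ x ∈ Icc a b, ∀ y ∈ Icc a b, x ≤ y →
      v y = v x + (eVariationOn u (Icc x y)).toReal := by
    intro x hx y hy hxy
    have h1 := eVariationOn.Icc_add_Icc u (s := univ) hx.1 hxy (mem_univ x)
    simp only [Set.univ_inter] at h1
    rw [hv_def]
    simp only
    rw [← h1, ENNReal.toReal_add (hfint a hamem x hx) (hfint x hx y hy)]
  have hvmono : MonotoneOn v (Icc a b) := by
    intro x hx y hy hxy
    rw [hadd x hx y hy hxy]
    have := ENNReal.toReal_nonneg (a := eVariationOn u (Icc x y))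
    linarith
  have hub : ∀ x ∈ Icc a b, ∀ y ∈ Icc a b, x ≤ y → ‖u y - u x‖ ≤ v y - v x := by
    intro x hx y hy hxy
    have h1 : edist (u y) (u x) ≤ eVariationOn u (Icc x y) :=
      eVariationOn.edist_le u (right_mem_Icc.2 hxy) (left_mem_Icc.2 hxy)
    have h2 : ‖u y - u x‖ ≤ (eVariationOn u (Icc x y)).toReal := by
      rw [← dist_eq_norm, dist_edist]
      exact ENNReal.toReal_mono (hfint x hx y hy) h1
    have := hadd x hx y hy hxy
    linarith
  have hvle : ∀ x ∈ Icc a b, ∀ y ∈ Icc a b, x ≤ y → v y - v x ≤ ∫ s in x..y, f0 s := by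
    intro x hx y hy hxy
    have h1 : (eVariationOn u (Icc x y)).toReal ≤ ∫ s in x..y, f0 s := by
      have h2 := ENNReal.toReal_mono ENNReal.ofReal_ne_top (hA x hx y hy hxy)
      rwa [ENNReal.toReal_ofReal
        (intervalIntegral.integral_nonneg hxy fun s _ => hf0nn s)] at h2
    have := hadd x hx y hy hxy
    linarith
  -- the clamp function and extended variation function
  set c : ℝ → ℝ := fun t => max a (min b t) with hc_def
  have hc1 : ∀ t, c t ∈ Icc a b := fun t =>
    ⟨le_max_left _ _, max_le hab.le (min_le_left _ _)⟩
  have hc2 : ∀ t ∈ Icc a b, c t = t := by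
    intro t ht
    simp [hc_def, min_eq_right ht.2, max_eq_right ht.1]
  have hcmono : Monotone c := fun x y h =>
    max_le_max le_rfl (min_le_min le_rfl h)
  have hccont : Continuous c := continuous_const.max (continuous_const.min continuous_id)
  set vb : ℝ → ℝ := fun t => v (c t) with hvb_def
  have hvbmono : Monotone vb := fun x y h => hvmono (hc1 x) (hc1 y) (hcmono h)
  have hvbeq : ∀ t ∈ Icc a b, vb t = v t := by
    intro t ht
    simp only [hvb_def]
    rw [hc2 t ht]
  set G : ℝ → ℝ := fun t => ∫ s in a..t, f0 s with hG_def
  have hGcont : Continuous G := intervalIntegral.continuous_primitive hf0ii a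
  have hGsub : ∀ x y : ℝ, G y - G x = ∫ s in x..y, f0 s := fun x y =>
    intervalIntegral.integral_interval_sub_left (hf0ii a y) (hf0ii a x)
  have hdistv : ∀ x y : ℝ, dist (vb y) (vb x) ≤ dist (G (c y)) (G (c x)) := by
    have key : ∀ x y : ℝ, x ≤ y →
        vb y - vb x ≤ G (c y) - G (c x) ∧ 0 ≤ vb y - vb x := by
      intro x y h
      refine ⟨?_, sub_nonneg.2 (hvbmono h)⟩
      rw [hGsub]
      exact (by simpa using hvle (c x) (hc1 x) (c y) (hc1 y) (hcmono h))
    intro x y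
    rcases le_total x y with h | h
    · obtain ⟨h1, h2⟩ := key x y h
      rw [Real.dist_eq, Real.dist_eq, abs_of_nonneg h2]
      exact h1.trans (le_abs_self _)
    · obtain ⟨h1, h2⟩ := key y x h
      rw [dist_comm, dist_comm (G (c y)), Real.dist_eq, Real.dist_eq, abs_of_nonneg h2]
      exact h1.trans (le_abs_self _)
  have hvbcont : Continuous vb := by
    rw [continuous_iff_continuousAt]
    intro x
    rw [ContinuousAt, tendsto_iff_dist_tendsto_zero]
    apply squeeze_zero (fun y => dist_nonneg) (fun y => hdistv x y)
    have h1 : Continuous fun y => G (c y) := hGcont.comp hccont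
    exact tendsto_iff_dist_tendsto_zero.1 (h1.tendsto x)
  -- the Stieltjes measure of the variation function
  set S := hvbmono.stieltjesFunction with hS_def
  have hS : ∀ x, S x = vb x := by
    intro x
    rw [hvbmono.stieltjesFunction_eq]
    exact rightLim_eq_of_tendsto
      ((hvbcont.tendsto x).mono_left nhdsWithin_le_nhds)
  set ν := S.measure with hν_def
  have hνIoc : ∀ x y : ℝ, ν (Ioc x y) = ENNReal.ofReal (vb y - vb x) := by
    intro x y
    rw [hν_def, S.measure_Ioc, hS, hS]
  set ρ : ℝ → ENNReal := ν.rnDeriv volume with hρ_def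
  set D : ℝ → ℝ := fun x => (ρ x).toReal with hD_def
  have hderiv : ∀ᵐ x : ℝ, HasDerivAt vb (D x) x := hvbmono.ae_hasDerivAt
  have hρm : Measurable ρ := Measure.measurable_rnDeriv _ _
  have hwd : ∀ s : Set ℝ, MeasurableSet s → (∫⁻ x in s, ρ x) ≤ ν s := by
    intro s hs
    rw [← withDensity_apply _ hs]
    exact Measure.withDensity_rnDeriv_le ν volume s
  have hρlt : ∀ᵐ x : ℝ, ρ x < ⊤ := Measure.rnDeriv_lt_top ν volume
  -- Lebesgue points of the derivative
  have hloc : LocallyIntegrable u'e volume := hint.locallyIntegrable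
  have hlp : ∀ᵐ x : ℝ, Filter.Tendsto
      (fun y => ⨍ z in Icc x y, ‖u'e z - u'e x‖) (nhdsWithin x (Ioi x)) (nhds 0) := by
    filter_upwards [(IsUnifLocDoublingMeasure.vitaliFamily (volume : Measure ℝ)
      1).ae_tendsto_average_norm_sub hloc] with x hx
    exact hx.comp (Real.tendsto_Icc_vitaliFamily_right x)
  -- the key pointwise inequality ‖u'‖ ≤ D almost everywhere on (a, b)
  have hkey : ∀ᵐ x : ℝ, x ∈ Ioo a b → f0 x ≤ D x := by
    filter_upwards [hderiv, hlp] with x hx1 hx2 hxab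
    have hxa : x ∈ Icc a b := ⟨hxab.1.le, hxab.2.le⟩
    -- slope of vb converges to D x from the right
    have hvs : Filter.Tendsto (fun y => (vb y - vb x)/(y - x))
        (nhdsWithin x (Ioi x)) (nhds (D x)) := by
      have h1 := (hasDerivAt_iff_tendsto_slope.1 hx1).mono_left (nhdsGT_le_nhdsNE x)
      simpa [slope_fun_def_field] using h1
    have hmem : Ioo x b ∈ nhdsWithin x (Ioi x) :=
      Ioo_mem_nhdsGT_of_mem ⟨le_rfl, hxab.2⟩
    -- slope of u converges to u'e x from the right
    have hbound : ∀ y ∈ Ioo x b,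
        ‖(y - x)⁻¹ • (u y - u x) - u'e x‖ ≤ ⨍ z in Icc x y, ‖u'e z - u'e x‖ := by
      intro y hy
      have hxy : x < y := hy.1
      have hymem : y ∈ Icc a b := ⟨(hxab.1.trans hxy).le, hy.2.le⟩
      have h1 : u y - u x = ∫ z in x..y, u'e z := husub x hxa y hymem
      have h2 : ‖(u y - u x) - (y - x) • u'e x‖ ≤ ∫ z in x..y, ‖u'e z - u'e x‖ := by
        have h3 : (y - x) • u'e x = ∫ z in x..y, u'e x := by
          rw [intervalIntegral.integral_const]
        rw [h1, h3, ← intervalIntegral.integral_sub (hu'eii x y) intervalIntegrable_const]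
        exact intervalIntegral.norm_integral_le_integral_norm hxy.le
      have h4 : ∫ z in x..y, ‖u'e z - u'e x‖ =
          (y - x) * ⨍ z in Icc x y, ‖u'e z - u'e x‖ := by
        rw [intervalIntegral.integral_of_le hxy.le, ← integral_Icc_eq_integral_Ioc,
          setAverage_eq, Real.volume_real_Icc_of_le hxy.le,
          smul_eq_mul, ← mul_assoc, mul_inv_cancel₀ (by linarith : y - x ≠ 0), one_mul]
      have hne0 : y - x ≠ 0 := by linarith
      have h5 : (y - x)⁻¹ • ((u y - u x) - (y - x) • u'e x) =
          (y - x)⁻¹ • (u y - u x) - u'e x := by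
        rw [smul_sub, smul_smul, inv_mul_cancel₀ hne0, one_smul]
      rw [← h5, norm_smul, Real.norm_eq_abs,
        abs_of_pos (inv_pos.2 (by linarith : (0:ℝ) < y - x))]
      calc (y - x)⁻¹ * ‖(u y - u x) - (y - x) • u'e x‖
          ≤ (y - x)⁻¹ * ((y - x) * ⨍ z in Icc x y, ‖u'e z - u'e x‖) := by
            rw [← h4]
            exact mul_le_mul_of_nonneg_left h2 (le_of_lt (inv_pos.2 (by linarith)))
        _ = ⨍ z in Icc x y, ‖u'e z - u'e x‖ := by
            rw [← mul_assoc, inv_mul_cancel₀ (by linarith : y - x ≠ 0), one_mul]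
    have hslope : Filter.Tendsto (fun y => (y - x)⁻¹ • (u y - u x))
        (nhdsWithin x (Ioi x)) (nhds (u'e x)) := by
      rw [tendsto_iff_norm_sub_tendsto_zero]
      apply squeeze_zero' (Filter.Eventually.of_forall fun y => norm_nonneg _)
      · filter_upwards [hmem] with y hy
        exact hbound y hy
      · exact hx2
    have hus : Filter.Tendsto (fun y => ‖u y - u x‖/(y - x))
        (nhdsWithin x (Ioi x)) (nhds (f0 x)) := by
      have h1 : Filter.Tendsto (fun y => ‖(y - x)⁻¹ • (u y - u x)‖)
          (nhdsWithin x (Ioi x)) (nhds ‖u'e x‖) :=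
        (continuous_norm.tendsto _).comp hslope
      apply h1.congr'
      filter_upwards [self_mem_nhdsWithin] with y hy
      rw [norm_smul, Real.norm_eq_abs,
        abs_of_pos (inv_pos.2 (sub_pos.2 hy)), div_eq_inv_mul]
    -- eventual inequality between the slopes
    have hineq : ∀ᶠ y in nhdsWithin x (Ioi x),
        ‖u y - u x‖/(y - x) ≤ (vb y - vb x)/(y - x) := by
      filter_upwards [hmem] with y hy
      have hxy : x < y := hy.1
      have hymem : y ∈ Icc a b := ⟨(hxab.1.trans hxy).le, hy.2.le⟩
      have h1 : ‖u y - u x‖ ≤ vb y - vb x := by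
        have h2 := hub x hxa y hymem hxy.le
        rw [hvbeq x hxa, hvbeq y hymem]
        exact h2
      exact div_le_div_of_nonneg_right h1 (by linarith) |>.trans_eq rfl
    exact le_of_tendsto_of_tendsto hus hvs hineq
  -- the fundamental identity: v t equals the integral of f0
  have hveq : ∀ t ∈ Icc a b, v t = ∫ s in a..t, f0 s := by
    intro t ht
    rcases eq_or_lt_of_le ht.1 with h | h
    · rw [← h, hva, intervalIntegral.integral_same]
    · have c1 : v t ≤ ∫ s in a..t, f0 s := by
        have := hvle a hamem t ht ht.1
        linarith [hva]
      have hνt : ν (Ioc a t) = ENNReal.ofReal (v t) := by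
        rw [hνIoc]
        congr 1
        rw [hvbeq t ht, hvbeq a hamem, hva, sub_zero]
      have hlint : (∫⁻ x in Ioc a t, ρ x) ≤ ENNReal.ofReal (v t) := by
        rw [← hνt]; exact hwd _ measurableSet_Ioc
      have hlt_top : (∫⁻ x in Ioc a t, ρ x) ≠ ⊤ :=
        ne_top_of_le_ne_top ENNReal.ofReal_ne_top hlint
      have hDint : IntegrableOn D (Ioc a t) :=
        integrable_toReal_of_lintegral_ne_top hρm.aemeasurable hlt_top
      have hne : ∀ᵐ x : ℝ, x ≠ t := by
        have h0 : (volume : Measure ℝ) {t} = 0 := measure_singleton t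
        rw [ae_iff]
        convert h0 using 2
        ext x
        simp
      have c2 : (∫ s in a..t, f0 s) ≤ ∫ x in Ioc a t, D x := by
        rw [intervalIntegral.integral_of_le h.le]
        apply integral_mono_ae hf0.integrableOn hDint
        have hae : ∀ᵐ x ∂(volume.restrict (Ioc a t)), f0 x ≤ D x := by
          rw [ae_restrict_iff' measurableSet_Ioc]
          filter_upwards [hkey, hne] with x h1 h2 h3
          exact h1 ⟨h3.1, lt_of_lt_of_le (lt_of_le_of_ne h3.2 h2) ht.2⟩
        exact hae
      have c3 : (∫ x in Ioc a t, D x) ≤ v t := by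
        have heq : (∫ x in Ioc a t, D x) = (∫⁻ x in Ioc a t, ρ x).toReal :=
          integral_toReal hρm.aemeasurable (ae_restrict_of_ae hρlt)
        rw [heq]
        calc (∫⁻ x in Ioc a t, ρ x).toReal
            ≤ (ENNReal.ofReal (v t)).toReal :=
              ENNReal.toReal_mono ENNReal.ofReal_ne_top hlint
          _ = v t := ENNReal.toReal_ofReal ENNReal.toReal_nonneg
      linarith
  -- basic facts about σ
  set M : ℝ := b - a + (eVariationOn u (Icc a b)).toReal with hM_def
  have hM : 0 < M := add_pos_of_pos_of_nonneg (sub_pos.2 hab) ENNReal.toReal_nonneg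
  have hσ : ∀ t, σ t = (t - a + v t)/M := hσdef
  have hσa : σ a = 0 := by rw [hσ, hva]; simp
  have hσb : σ b = 1 := by
    rw [hσ]
    exact div_self hM.ne'
  have hstrict : StrictMonoOn σ (Icc a b) := by
    intro x hx y hy hxy
    rw [hσ, hσ, div_lt_div_iff_of_pos_right hM]
    have := hadd x hx y hy hxy.le
    have := ENNReal.toReal_nonneg (a := eVariationOn u (Icc x y))
    linarith
  have hvcont : ContinuousOn v (Icc a b) := by
    apply (hvbcont.continuousOn (s := Icc a b)).congr
    intro t ht
    exact (hvbeq t ht).symm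
  have hσcont : ContinuousOn σ (Icc a b) := by
    have hfe : σ = fun t => (t - a + v t)/M := funext hσ
    rw [hfe]
    exact ((continuous_id.continuousOn.sub continuousOn_const).add hvcont).div_const M
  have hmonoOn : MonotoneOn σ (Icc a b) := hstrict.monotoneOn
  have himg : σ '' Icc a b = Icc 0 1 := by
    apply Subset.antisymm
    · rintro s ⟨t, ht, rfl⟩
      constructor
      · rw [← hσa]; exact hmonoOn hamem ht ht.1
      · rw [← hσb]; exact hmonoOn ht hbmem ht.2
    · have h1 := intermediate_value_Icc hab.le hσcont
      rw [hσa, hσb] at h1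
      exact h1
  have hMcoe : ((Real.toNNReal M : NNReal) : ℝ) = M := Real.coe_toNNReal M hM.le
  -- key quantitative estimates for the inverse
  have key : ∀ x ∈ Icc a b, ∀ y ∈ Icc a b, x ≤ y →
      y - x ≤ M * (σ y - σ x) ∧ dist (u y) (u x) ≤ M * (σ y - σ x) := by
    intro x hx y hy hxy
    have h2 : M * (σ y - σ x) = (y - x) + (v y - v x) := by
      rw [hσ, hσ]
      field_simp
      ring
    have h3 : 0 ≤ v y - v x := sub_nonneg.2 (hvmono hx hy hxy)
    refine ⟨by linarith, ?_⟩
    rw [dist_eq_norm]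
    have := hub x hx y hy hxy
    linarith
  set φ₀ : ℝ → ℝ := Function.invFunOn σ (Icc a b) with hφ_def
  have hleft : ∀ t ∈ Icc a b, φ₀ (σ t) = t := fun t ht =>
    hstrict.injOn.leftInvOn_invFunOn ht
  have hmemφ : ∀ s ∈ Icc (0:ℝ) 1, φ₀ s ∈ Icc a b ∧ σ (φ₀ s) = s := by
    intro s hs
    rw [← himg] at hs
    obtain ⟨t, ht, hst⟩ := hs
    exact ⟨Function.invFunOn_mem ⟨t, ht, hst⟩, Function.invFunOn_eq ⟨t, ht, hst⟩⟩
  -- Lipschitz estimates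
  have hlip1 : LipschitzOnWith (Real.toNNReal M) φ₀ (Icc 0 1) := by
    rw [lipschitzOnWith_iff_dist_le_mul]
    intro s1 h1 s2 h2
    obtain ⟨ht1, hs1⟩ := hmemφ s1 h1
    obtain ⟨ht2, hs2⟩ := hmemφ s2 h2
    rw [hMcoe]
    rcases le_total (φ₀ s1) (φ₀ s2) with h | h
    · obtain ⟨hk, -⟩ := key _ ht1 _ ht2 h
      have hσle : σ (φ₀ s1) ≤ σ (φ₀ s2) := hmonoOn ht1 ht2 h
      rw [hs1, hs2] at hσle hk
      rw [Real.dist_eq, Real.dist_eq, abs_of_nonpos (by linarith : φ₀ s1 - φ₀ s2 ≤ 0),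
        abs_of_nonpos (by linarith : s1 - s2 ≤ 0)]
      linarith
    · obtain ⟨hk, -⟩ := key _ ht2 _ ht1 h
      have hσle : σ (φ₀ s2) ≤ σ (φ₀ s1) := hmonoOn ht2 ht1 h
      rw [hs1, hs2] at hσle hk
      rw [Real.dist_eq, Real.dist_eq, abs_of_nonneg (by linarith : 0 ≤ φ₀ s1 - φ₀ s2),
        abs_of_nonneg (by linarith : 0 ≤ s1 - s2)]
      linarith
  have hlip2 : LipschitzOnWith (Real.toNNReal M) (u ∘ φ₀) (Icc 0 1) := by
    rw [lipschitzOnWith_iff_dist_le_mul]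
    intro s1 h1 s2 h2
    obtain ⟨ht1, hs1⟩ := hmemφ s1 h1
    obtain ⟨ht2, hs2⟩ := hmemφ s2 h2
    rw [hMcoe]
    simp only [Function.comp_apply]
    rcases le_total (φ₀ s1) (φ₀ s2) with h | h
    · obtain ⟨-, hk⟩ := key _ ht1 _ ht2 h
      have hσle : σ (φ₀ s1) ≤ σ (φ₀ s2) := hmonoOn ht1 ht2 h
      rw [hs1, hs2] at hσle hk
      rw [dist_comm] at hk
      rw [Real.dist_eq, abs_of_nonpos (by linarith : s1 - s2 ≤ 0)]
      linarith
    · obtain ⟨-, hk⟩ := key _ ht2 _ ht1 h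
      have hσle : σ (φ₀ s2) ≤ σ (φ₀ s1) := hmonoOn ht2 ht1 h
      rw [hs1, hs2] at hσle hk
      rw [Real.dist_eq, abs_of_nonneg (by linarith : 0 ≤ s1 - s2)]
      linarith
  -- the absolute continuity of σ
  have hgpart : ∃ g : ℝ → ℝ, IntegrableOn g (Icc a b) ∧
      ∀ t ∈ Icc a b, σ t = σ a + ∫ s in a..t, g s := by
    have hone : IntegrableOn (fun _ : ℝ => (1:ℝ)) (Icc a b) :=
      integrableOn_const (by rw [Real.volume_Icc]; exact ENNReal.ofReal_ne_top)
    refine ⟨fun s => (1 + f0 s)/M, (hone.add hf0.integrableOn).div_const M, ?_⟩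
    intro t ht
    rw [hσa, zero_add]
    have h1 : (∫ s in a..t, (1 + f0 s)/M) = (∫ s in a..t, (1 + f0 s))/M :=
      intervalIntegral.integral_div M _
    have h2 : (∫ s in a..t, (1 + f0 s)) = (t - a) + ∫ s in a..t, f0 s := by
      rw [intervalIntegral.integral_add intervalIntegrable_const (hf0ii a t)]
      simp [intervalIntegral.integral_const]
    rw [h1, h2, hσ, hveq t ht]
  exact ⟨hgpart, hstrict, himg, φ₀, hleft, fun s hs => (hmemφ s hs).2, hlip1, hlip2⟩
end
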